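/- arXiv:1201.5972 — 6 statements merged into one kernel-verified Lean document; each statement's English description precedes it below -/
import Mathlib

section
/- For any two centrally symmetric convex bodies K and D in R^n, the covering number N(K,D) satisfies vol(K)/vol(K ∩ D) ≤ N(K,D) ≤ 3^n · vol(K)/vol(K ∩ D). -/
open Pointwise MeasureTheory
open ENNReal NNReal

lemma vol_slice (c : ℝ≥0∞) :
    volume {t : ℝ | t ∈ Set.Ioi (0:ℝ) ∧ ENNReal.ofReal t < c} = c := by
  rcases eq_or_ne c ⊤ with rfl | hc
  · have h : {t : ℝ | t ∈ Set.Ioi (0:ℝ) ∧ ENNReal.ofReal t < ⊤} = Set.Ioi 0 := by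
      ext t; simp
    rw [h, Real.volume_Ioi]
  · have h : {t : ℝ | t ∈ Set.Ioi (0:ℝ) ∧ ENNReal.ofReal t < c} = Set.Ioo 0 c.toReal := by
      ext t
      simp only [Set.mem_setOf_eq, Set.mem_Ioi, Set.mem_Ioo]
      constructor
      · rintro ⟨h1, h2⟩; exact ⟨h1, (ENNReal.ofReal_lt_iff_lt_toReal h1.le hc).1 h2⟩
      · rintro ⟨h1, h2⟩; exact ⟨h1, (ENNReal.ofReal_lt_iff_lt_toReal h1.le hc).2 h2⟩
    rw [h, Real.volume_Ioo, sub_zero, ENNReal.ofReal_toReal hc]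

lemma layercake {α : Type*} [MeasurableSpace α] (μ : Measure α) [SigmaFinite μ]
    (f : α → ℝ≥0∞) (hf : Measurable f) :
    ∫⁻ x, f x ∂μ = ∫⁻ t in Set.Ioi (0:ℝ), μ {x | ENNReal.ofReal t < f x} := by
  have hset : MeasurableSet {p : ℝ × α | ENNReal.ofReal p.1 < f p.2} :=
    measurableSet_lt (ENNReal.measurable_ofReal.comp measurable_fst) (hf.comp measurable_snd)
  have key : ∀ t : ℝ, μ {x | ENNReal.ofReal t < f x}
      = ∫⁻ x, {p : ℝ × α | ENNReal.ofReal p.1 < f p.2}.indicator 1 (t, x) ∂μ := by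
    intro t
    have hms : MeasurableSet {x : α | ENNReal.ofReal t < f x} :=
      measurableSet_lt measurable_const hf
    have h1 : ∀ x, ({p : ℝ × α | ENNReal.ofReal p.1 < f p.2}.indicator 1 (t, x) : ℝ≥0∞)
        = {x : α | ENNReal.ofReal t < f x}.indicator 1 x := by
      intro x
      by_cases hx : ENNReal.ofReal t < f x
      · simp [Set.indicator_apply, Set.mem_setOf_eq, hx]
      · simp [Set.indicator_apply, Set.mem_setOf_eq, hx]
    simp_rw [h1]
    rw [lintegral_indicator_one hms]
  calc ∫⁻ x, f x ∂μ
      = ∫⁻ x, volume {t : ℝ | t ∈ Set.Ioi (0:ℝ) ∧ ENNReal.ofReal t < f x} ∂μ := by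
        simp_rw [vol_slice]
    _ = ∫⁻ x, (∫⁻ t in Set.Ioi (0:ℝ), {p : ℝ × α | ENNReal.ofReal p.1 < f p.2}.indicator 1 (t, x)) ∂μ := by
        refine lintegral_congr fun x => ?_
        have hms : MeasurableSet {t : ℝ | ENNReal.ofReal t < f x} :=
          measurableSet_lt ENNReal.measurable_ofReal measurable_const
        have h1 : ∀ t : ℝ, ({p : ℝ × α | ENNReal.ofReal p.1 < f p.2}.indicator 1 (t, x) : ℝ≥0∞)
            = {t : ℝ | ENNReal.ofReal t < f x}.indicator 1 t := by
          intro t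
          by_cases ht : ENNReal.ofReal t < f x
          · simp [Set.indicator_apply, Set.mem_setOf_eq, ht]
          · simp [Set.indicator_apply, Set.mem_setOf_eq, ht]
        simp_rw [h1]
        rw [lintegral_indicator_one hms, Measure.restrict_apply hms]
        congr 1
        ext t
        simp [Set.mem_setOf_eq, and_comm]
    _ = ∫⁻ t in Set.Ioi (0:ℝ), (∫⁻ x, {p : ℝ × α | ENNReal.ofReal p.1 < f p.2}.indicator 1 (t, x) ∂μ) := by
        refine (lintegral_lintegral_swap ?_).symm
        exact (measurable_one.indicator hset).aemeasurable
    _ = ∫⁻ t in Set.Ioi (0:ℝ), μ {x | ENNReal.ofReal t < f x} := by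
        simp_rw [← key]

lemma vadd_vol (c : ℝ) (A : Set ℝ) : volume (A + {c}) = volume A := by
  have h : A + {c} = c +ᵥ A := by
    ext z
    constructor
    · intro hz
      rw [Set.mem_add] at hz
      obtain ⟨x, hx, y, hy, hxy⟩ := hz
      rcases Set.mem_singleton_iff.1 hy with rfl
      exact Set.mem_vadd_set.2 ⟨x, hx, by rw [vadd_eq_add, add_comm, hxy]⟩
    · intro hz
      obtain ⟨x, hx, hxz⟩ := Set.mem_vadd_set.1 hz
      rw [vadd_eq_add] at hxz
      exact Set.mem_add.2 ⟨x, hx, c, Set.mem_singleton c, by rw [add_comm x c, hxz]⟩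
  rw [h, measure_vadd]

lemma oneDimBM_compact (A B : Set ℝ) (hA : A.Nonempty) (hB : B.Nonempty)
    (hAc : IsCompact A) (hBc : IsCompact B) :
    volume A + volume B ≤ volume (A + B) := by
  set a := sSup A with ha
  set b := sInf B with hb
  have haA : a ∈ A := hAc.sSup_mem hA
  have hbB : b ∈ B := hBc.sInf_mem hB
  set U : Set ℝ := A + {b} with hU
  set V : Set ℝ := {a} + B with hV
  have hUsub : U ⊆ A + B := Set.add_subset_add_left (Set.singleton_subset_iff.2 hbB)
  have hVsub : V ⊆ A + B := Set.add_subset_add_right (Set.singleton_subset_iff.2 haA)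
  have hUle : ∀ u ∈ U, u ≤ a + b := by
    rintro u ⟨x, hx, y, hy, rfl⟩
    rcases Set.mem_singleton_iff.1 hy with rfl
    exact add_le_add_left (le_csSup hAc.bddAbove hx) _
  have hVge : ∀ v ∈ V, a + b ≤ v := by
    rintro v ⟨x, hx, y, hy, rfl⟩
    rcases Set.mem_singleton_iff.1 hx with rfl
    exact add_le_add_right (csInf_le hBc.bddBelow hy) _
  have hUV : U ∩ V ⊆ {a + b} := by
    rintro z ⟨hzU, hzV⟩
    exact Set.mem_singleton_iff.2 (le_antisymm (hUle z hzU) (hVge z hzV))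
  have hVmeas : MeasurableSet V := (isCompact_singleton.add hBc).measurableSet
  have hVvol : volume V = volume B := by
    rw [hV, add_comm ({a} : Set ℝ) B, vadd_vol]
  calc volume A + volume B = volume U + volume V := by rw [vadd_vol, hVvol]
    _ = volume (U ∪ V) + volume (U ∩ V) := (measure_union_add_inter U hVmeas).symm
    _ ≤ volume (A + B) + 0 := by
        refine add_le_add (measure_mono (Set.union_subset hUsub hVsub)) ?_
        refine le_trans (measure_mono hUV) ?_
        simp
    _ = volume (A + B) := add_zero _

lemma oneDimBM (A B : Set ℝ) (hA : A.Nonempty) (hB : B.Nonempty)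
    (hAm : MeasurableSet A) (hBm : MeasurableSet B) :
    volume A + volume B ≤ volume (A + B) := by
  obtain ⟨a0, ha0⟩ := hA
  obtain ⟨b0, hb0⟩ := hB
  have hAsub : volume A ≤ volume (A + B) := by
    rw [← vadd_vol b0 A]
    exact measure_mono (Set.add_subset_add_left (Set.singleton_subset_iff.2 hb0))
  have hBsub : volume B ≤ volume (A + B) := by
    have : volume B = volume ({a0} + B) := by
      rw [add_comm ({a0} : Set ℝ) B, vadd_vol]
    rw [this]
    exact measure_mono (Set.add_subset_add_right (Set.singleton_subset_iff.2 ha0))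
  rcases eq_or_ne (volume A) ⊤ with hAt | hAt
  · have : volume (A + B) = ⊤ := top_le_iff.1 (hAt ▸ hAsub)
    simp [this]
  rcases eq_or_ne (volume B) ⊤ with hBt | hBt
  · have : volume (A + B) = ⊤ := top_le_iff.1 (hBt ▸ hBsub)
    simp [this]
  refine ENNReal.le_of_forall_pos_le_add fun ε hε _ => ?_
  have hε2 : ((ε : ℝ≥0∞) / 2) ≠ 0 := by
    simp [ENNReal.div_eq_zero_iff, (show (ε:ℝ≥0∞) ≠ 0 by exact_mod_cast hε.ne')]
  obtain ⟨KA, hKAsub, hKAc, hKAvol⟩ := hAm.exists_isCompact_lt_add hAt hε2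
  obtain ⟨KB, hKBsub, hKBc, hKBvol⟩ := hBm.exists_isCompact_lt_add hBt hε2
  set KA' := KA ∪ {a0} with hKA'
  set KB' := KB ∪ {b0} with hKB'
  have hKA'c : IsCompact KA' := hKAc.union isCompact_singleton
  have hKB'c : IsCompact KB' := hKBc.union isCompact_singleton
  have hKA'sub : KA' ⊆ A := Set.union_subset hKAsub (Set.singleton_subset_iff.2 ha0)
  have hKB'sub : KB' ⊆ B := Set.union_subset hKBsub (Set.singleton_subset_iff.2 hb0)
  have key := oneDimBM_compact KA' KB' ⟨a0, Set.mem_union_right _ rfl⟩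
    ⟨b0, Set.mem_union_right _ rfl⟩ hKA'c hKB'c
  have h1 : volume A + volume B ≤ (volume KA' + ε/2) + (volume KB' + ε/2) := by
    refine add_le_add ?_ ?_
    · exact le_trans (le_trans hKAvol.le (add_le_add_left (measure_mono Set.subset_union_left) _)) le_rfl
    · exact le_trans (le_trans hKBvol.le (add_le_add_left (measure_mono Set.subset_union_left) _)) le_rfl
  calc volume A + volume B ≤ (volume KA' + ε/2) + (volume KB' + ε/2) := h1
    _ = (volume KA' + volume KB') + (ε/2 + ε/2) := by ring
    _ ≤ volume (KA' + KB') + ε := by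
        rw [ENNReal.add_halves]
        exact add_le_add_left key _
    _ ≤ volume (A + B) + ε :=
        add_le_add_left (measure_mono (Set.add_subset_add hKA'sub hKB'sub)) _

lemma ennreal_two_mul_le (x y : ℝ≥0∞) : 2 * (x * y) ≤ x ^ 2 + y ^ 2 := by
  rcases eq_or_ne x 0 with rfl | hx0; · simp
  rcases eq_or_ne y 0 with rfl | hy0; · simp
  rcases eq_or_ne x ⊤ with rfl | hxt
  · have : (⊤ : ℝ≥0∞) ^ 2 + y ^ 2 = ⊤ := by simp [ENNReal.top_pow]
    rw [this]; exact le_top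
  rcases eq_or_ne y ⊤ with rfl | hyt
  · have : x ^ 2 + (⊤ : ℝ≥0∞) ^ 2 = ⊤ := by simp [ENNReal.top_pow]
    rw [this]; exact le_top
  lift x to ℝ≥0 using hxt
  lift y to ℝ≥0 using hyt
  rw [← ENNReal.coe_mul, ← ENNReal.coe_pow, ← ENNReal.coe_pow]
  rw [show ((2:ℝ≥0∞) = ((2:ℝ≥0) : ℝ≥0∞)) by norm_cast, ← ENNReal.coe_mul, ← ENNReal.coe_add,
    ENNReal.coe_le_coe, ← NNReal.coe_le_coe]
  push_cast
  nlinarith [sq_nonneg ((x:ℝ) - (y:ℝ))]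

lemma ennreal_four_mul_le (x y : ℝ≥0∞) : 4 * (x * y) ≤ (x + y) ^ 2 := by
  have h : (x + y) ^ 2 = x ^ 2 + y ^ 2 + 2 * (x * y) := by ring
  rw [h]
  calc 4 * (x * y) = 2 * (x * y) + 2 * (x * y) := by ring
    _ ≤ (x ^ 2 + y ^ 2) + 2 * (x * y) := add_le_add_left (ennreal_two_mul_le x y) _

lemma cov_scale (c : ℝ) (hc : 0 < c) (R : ℝ) (φ : ℝ → ℝ≥0∞) (hφ : Measurable φ) :
    ∫⁻ t in Set.Ioo 0 (R / c), φ (c * t) = ENNReal.ofReal c⁻¹ * ∫⁻ s in Set.Ioo 0 R, φ s := by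
  have hpre : (fun t : ℝ => c * t) ⁻¹' (Set.Ioo 0 R) = Set.Ioo 0 (R / c) := by
    ext t
    simp only [Set.mem_preimage, Set.mem_Ioo, lt_div_iff₀ hc]
    constructor <;> rintro ⟨h1, h2⟩ <;> exact ⟨by nlinarith, by nlinarith⟩
  have hmeas : Measurable (fun t : ℝ => c * t) := measurable_const_mul c
  have h1 : ∫⁻ s in Set.Ioo 0 R, φ s
      ∂(Measure.map (fun t : ℝ => c * t) volume)
      = ∫⁻ t in Set.Ioo 0 (R / c), φ (c * t) := by
    rw [Measure.restrict_map hmeas measurableSet_Ioo, hpre, lintegral_map hφ hmeas]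
  rw [← h1, Real.map_volume_mul_left (ne_of_gt hc)]
  rw [abs_of_pos (inv_pos.2 hc)]
  simp [lintegral_smul_measure]

lemma lint_Ioi_eq_Ioo (φ : ℝ → ℝ≥0∞) (hφ : Measurable φ) (a : ℝ) (ha : 0 < a)
    (h0 : ∀ s, a ≤ s → φ s = 0) :
    ∫⁻ s in Set.Ioi (0:ℝ), φ s = ∫⁻ s in Set.Ioo 0 a, φ s := by
  have hsplit : Set.Ioi (0:ℝ) = Set.Ioo 0 a ∪ (Set.Ici a) := by
    ext s
    simp only [Set.mem_Ioi, Set.mem_union, Set.mem_Ioo, Set.mem_Ici]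
    constructor
    · intro hs
      rcases lt_or_ge s a with h | h
      · exact Or.inl ⟨hs, h⟩
      · exact Or.inr h
    · rintro (⟨h1, _⟩ | h1)
      · exact h1
      · linarith
  have hdisj : Disjoint (Set.Ioo (0:ℝ) a) (Set.Ici a) := by
    rw [Set.disjoint_left]
    rintro s ⟨_, h2⟩ h3
    exact absurd h3 (not_le.2 h2)
  rw [hsplit, lintegral_union measurableSet_Ici hdisj]
  have : ∫⁻ s in Set.Ici a, φ s = 0 := by
    rw [setLIntegral_congr_fun measurableSet_Ici (fun s hs => h0 s hs),
      lintegral_zero]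
  rw [this, add_zero]

lemma pl1_core (f g h : ℝ → ℝ≥0∞) (hf : Measurable f) (hg : Measurable g) (hh : Measurable h)
    (hfb : (⨆ x, f x) ≠ ⊤) (hgb : (⨆ x, g x) ≠ ⊤)
    (H : ∀ x y, f x * g y ≤ h ((2:ℝ)⁻¹ • (x + y)) ^ 2) :
    (∫⁻ x, f x) * (∫⁻ y, g y) ≤ (∫⁻ z, h z) ^ 2 := by
  rcases eq_or_ne (⨆ x, f x) 0 with hMf0 | hMf0
  · have hz : ∀ x, f x = 0 := fun x => le_antisymm (hMf0 ▸ le_iSup f x) zero_le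
    simp [hz]
  rcases eq_or_ne (⨆ y, g y) 0 with hMg0 | hMg0
  · have hz : ∀ y, g y = 0 := fun y => le_antisymm (hMg0 ▸ le_iSup g y) zero_le
    simp [hz]
  set a := (⨆ x, f x).toReal with hadef
  set b := (⨆ y, g y).toReal with hbdef
  have ha : 0 < a := ENNReal.toReal_pos hMf0 hfb
  have hb : 0 < b := ENNReal.toReal_pos hMg0 hgb
  set c := Real.sqrt (a / b) with hcdef
  have hc : 0 < c := Real.sqrt_pos.2 (div_pos ha hb)
  have hc2 : c ^ 2 = a / b := Real.sq_sqrt (div_pos ha hb).le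
  have hcb : c * (c * b) = a := by
    have h1 : c * (c * b) = c ^ 2 * b := by ring
    rw [h1, hc2]; field_simp
  set T := c * b with hTdef
  have hTpos : 0 < T := mul_pos hc hb
  set φ := fun s : ℝ => volume {x | ENNReal.ofReal s < f x} with hφdef
  set ψ := fun s : ℝ => volume {y | ENNReal.ofReal s < g y} with hψdef
  set χ := fun s : ℝ => volume {z | ENNReal.ofReal s < h z} with hχdef
  have hφa : Antitone φ := fun s s' hss' =>
    measure_mono fun x hx => lt_of_le_of_lt (ENNReal.ofReal_le_ofReal hss') hx
  have hψa : Antitone ψ := fun s s' hss' =>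
    measure_mono fun x hx => lt_of_le_of_lt (ENNReal.ofReal_le_ofReal hss') hx
  have hχa : Antitone χ := fun s s' hss' =>
    measure_mono fun x hx => lt_of_le_of_lt (ENNReal.ofReal_le_ofReal hss') hx
  have hφm : Measurable φ := hφa.measurable
  have hψm : Measurable ψ := hψa.measurable
  have hχm : Measurable χ := hχa.measurable
  -- pointwise superlevel inequality
  have key : ∀ t ∈ Set.Ioo (0:ℝ) T, 2⁻¹ * (φ (c * t) + ψ (c⁻¹ * t)) ≤ χ t := by
    rintro t ⟨ht0, htT⟩
    set S1 := {x | ENNReal.ofReal (c * t) < f x} with hS1def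
    set S2 := {y | ENNReal.ofReal (c⁻¹ * t) < g y} with hS2def
    have hS1m : MeasurableSet S1 := measurableSet_lt measurable_const hf
    have hS2m : MeasurableSet S2 := measurableSet_lt measurable_const hg
    have hS1ne : S1.Nonempty := by
      have h1 : ENNReal.ofReal (c * t) < ⨆ x, f x := by
        have h2 : c * t < a := by nlinarith
        calc ENNReal.ofReal (c * t) < ENNReal.ofReal a :=
              (ENNReal.ofReal_lt_ofReal_iff ha).2 h2
          _ = ⨆ x, f x := ENNReal.ofReal_toReal hfb
      obtain ⟨x, hx⟩ := lt_iSup_iff.1 h1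
      exact ⟨x, hx⟩
    have hS2ne : S2.Nonempty := by
      have h1 : ENNReal.ofReal (c⁻¹ * t) < ⨆ y, g y := by
        have h2 : c⁻¹ * t < b := by
          have h3 : c⁻¹ * t < c⁻¹ * T := by
            exact mul_lt_mul_of_pos_left htT (inv_pos.2 hc)
          have h4 : c⁻¹ * T = b := by
            rw [hTdef]; field_simp
          linarith
        calc ENNReal.ofReal (c⁻¹ * t) < ENNReal.ofReal b :=
              (ENNReal.ofReal_lt_ofReal_iff hb).2 h2
          _ = ⨆ y, g y := ENNReal.ofReal_toReal hgb
      obtain ⟨y, hy⟩ := lt_iSup_iff.1 h1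
      exact ⟨y, hy⟩
    have hincl : (2:ℝ)⁻¹ • (S1 + S2) ⊆ {z | ENNReal.ofReal t < h z} := by
      rintro z ⟨w, ⟨x, hx, y, hy, rfl⟩, rfl⟩
      have hprod : ENNReal.ofReal t ^ 2 < f x * g y := by
        have hmul : ENNReal.ofReal (c * t) * ENNReal.ofReal (c⁻¹ * t)
            = ENNReal.ofReal t ^ 2 := by
          rw [← ENNReal.ofReal_mul (by positivity)]
          rw [show c * t * (c⁻¹ * t) = t * t by field_simp]
          rw [sq, ENNReal.ofReal_mul ht0.le]
        rw [← hmul]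
        exact ENNReal.mul_lt_mul hx hy
      have hle := H x y
      show ENNReal.ofReal t < h ((2:ℝ)⁻¹ • (x + y))
      by_contra hcon
      push_neg at hcon
      have hsq : h ((2:ℝ)⁻¹ • (x + y)) ^ 2 ≤ ENNReal.ofReal t ^ 2 :=
        pow_le_pow_left' hcon 2
      exact absurd (lt_of_lt_of_le (lt_of_lt_of_le hprod hle) hsq) (lt_irrefl _)
    have h2 : volume ((2:ℝ)⁻¹ • (S1 + S2)) = 2⁻¹ * volume (S1 + S2) := by
      rw [Measure.addHaar_smul]
      congr 1
      rw [Module.finrank_self, pow_one, abs_of_pos (by norm_num : (0:ℝ) < 2⁻¹)]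
      rw [ENNReal.ofReal_inv_of_pos (by norm_num : (0:ℝ) < 2)]
      norm_num
    calc 2⁻¹ * (φ (c * t) + ψ (c⁻¹ * t))
        ≤ 2⁻¹ * volume (S1 + S2) :=
          mul_le_mul_right (oneDimBM S1 S2 hS1ne hS2ne hS1m hS2m) _
      _ = volume ((2:ℝ)⁻¹ • (S1 + S2)) := h2.symm
      _ ≤ χ t := measure_mono hincl
  -- integrate
  have hφct : Measurable fun t : ℝ => φ (c * t) := hφm.comp (measurable_const_mul c)
  have hψct : Measurable fun t : ℝ => ψ (c⁻¹ * t) := hψm.comp (measurable_const_mul c⁻¹)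
  have step1 : ∫⁻ z, h z ≥ 2⁻¹ * ((∫⁻ t in Set.Ioo 0 T, φ (c * t)) +
      ∫⁻ t in Set.Ioo 0 T, ψ (c⁻¹ * t)) := by
    rw [layercake volume h hh]
    calc 2⁻¹ * ((∫⁻ t in Set.Ioo 0 T, φ (c * t)) + ∫⁻ t in Set.Ioo 0 T, ψ (c⁻¹ * t))
        = ∫⁻ t in Set.Ioo 0 T, 2⁻¹ * (φ (c * t) + ψ (c⁻¹ * t)) := by
          rw [lintegral_const_mul _ (show Measurable fun t => φ (c * t) + ψ (c⁻¹ * t) from hφct.add hψct), lintegral_add_left hφct]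
      _ ≤ ∫⁻ t in Set.Ioo 0 T, χ t := setLIntegral_mono hχm key
      _ ≤ ∫⁻ t in Set.Ioi 0, χ t :=
          lintegral_mono' (Measure.restrict_mono Set.Ioo_subset_Ioi_self le_rfl) le_rfl
  have hcov1 : ∫⁻ t in Set.Ioo 0 T, φ (c * t)
      = ENNReal.ofReal c⁻¹ * ∫⁻ s in Set.Ioo 0 a, φ s := by
    have : T = a / c := by
      field_simp [hTdef]
      nlinarith [hcb]
    rw [this]
    exact cov_scale c hc a φ hφm
  have hcov2 : ∫⁻ t in Set.Ioo 0 T, ψ (c⁻¹ * t)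
      = ENNReal.ofReal c * ∫⁻ s in Set.Ioo 0 b, ψ s := by
    have h1 : T = b / c⁻¹ := by
      rw [hTdef, div_eq_mul_inv, inv_inv, mul_comm]
    rw [h1]
    have := cov_scale c⁻¹ (inv_pos.2 hc) b ψ hψm
    rw [inv_inv] at this
    exact this
  have hFa : ∫⁻ s in Set.Ioo 0 a, φ s = ∫⁻ x, f x := by
    rw [layercake volume f hf]
    refine (lint_Ioi_eq_Ioo φ hφm a ha ?_).symm
    intro s hs
    have : {x | ENNReal.ofReal s < f x} = ∅ := by
      ext x
      simp only [Set.mem_setOf_eq, Set.mem_empty_iff_false, iff_false, not_lt]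
      calc f x ≤ ⨆ x, f x := le_iSup f x
        _ = ENNReal.ofReal a := (ENNReal.ofReal_toReal hfb).symm
        _ ≤ ENNReal.ofReal s := ENNReal.ofReal_le_ofReal hs
    rw [hφdef]; simp only []; rw [this, measure_empty]
  have hGb : ∫⁻ s in Set.Ioo 0 b, ψ s = ∫⁻ y, g y := by
    rw [layercake volume g hg]
    refine (lint_Ioi_eq_Ioo ψ hψm b hb ?_).symm
    intro s hs
    have : {y | ENNReal.ofReal s < g y} = ∅ := by
      ext y
      simp only [Set.mem_setOf_eq, Set.mem_empty_iff_false, iff_false, not_lt]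
      calc g y ≤ ⨆ y, g y := le_iSup g y
        _ = ENNReal.ofReal b := (ENNReal.ofReal_toReal hgb).symm
        _ ≤ ENNReal.ofReal s := ENNReal.ofReal_le_ofReal hs
    rw [hψdef]; simp only []; rw [this, measure_empty]
  set F := ∫⁻ x, f x with hFdef
  set G := ∫⁻ y, g y with hGdef
  set X := ENNReal.ofReal c⁻¹ * F with hXdef
  set Y := ENNReal.ofReal c * G with hYdef
  have hbig : 2⁻¹ * (X + Y) ≤ ∫⁻ z, h z := by
    rw [hXdef, hYdef, ← hFa, ← hGb, ← hcov1, ← hcov2]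
    exact step1
  have hXY : X * Y = F * G := by
    rw [hXdef, hYdef]
    have h1 : ENNReal.ofReal c⁻¹ * ENNReal.ofReal c = 1 := by
      rw [← ENNReal.ofReal_mul (inv_nonneg.2 hc.le), inv_mul_cancel₀ hc.ne', ENNReal.ofReal_one]
    calc ENNReal.ofReal c⁻¹ * F * (ENNReal.ofReal c * G)
        = ENNReal.ofReal c⁻¹ * ENNReal.ofReal c * (F * G) := by ring
      _ = 1 * (F * G) := by rw [h1]
      _ = F * G := one_mul _
  calc F * G = X * Y := hXY.symm
    _ = 4⁻¹ * (4 * (X * Y)) := by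
        rw [show (4:ℝ≥0∞)⁻¹ * (4 * (X * Y)) = ((4:ℝ≥0∞)⁻¹ * 4) * (X * Y) from
          (mul_assoc _ _ _).symm]
        rw [ENNReal.inv_mul_cancel (by norm_num) (by norm_num), one_mul]
    _ ≤ 4⁻¹ * (X + Y) ^ 2 := mul_le_mul_right (ennreal_four_mul_le X Y) _
    _ = (2⁻¹ * (X + Y)) ^ 2 := by
        rw [mul_pow, ← ENNReal.inv_pow]
        norm_num
    _ ≤ (∫⁻ z, h z) ^ 2 := pow_le_pow_left' hbig 2

lemma min_nat_sup (v : ℝ≥0∞) : (⨆ N : ℕ, min v (N : ℝ≥0∞)) = v := by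
  refine le_antisymm (iSup_le fun N => min_le_left _ _) ?_
  rcases eq_or_ne v ⊤ with rfl | hv
  · have h1 : ∀ N : ℕ, min (⊤:ℝ≥0∞) (N:ℝ≥0∞) = (N:ℝ≥0∞) := fun N => min_eq_right le_top
    simp only [h1]
    rw [ENNReal.iSup_natCast]
  · obtain ⟨N, hN⟩ := ENNReal.exists_nat_gt hv
    calc v = min v (N:ℝ≥0∞) := (min_eq_left hN.le).symm
      _ ≤ ⨆ N : ℕ, min v (N:ℝ≥0∞) := le_iSup (fun N : ℕ => min v (N:ℝ≥0∞)) N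

lemma pl1 (f g h : ℝ → ℝ≥0∞) (hf : Measurable f) (hg : Measurable g) (hh : Measurable h)
    (H : ∀ x y, f x * g y ≤ h ((2:ℝ)⁻¹ • (x + y)) ^ 2) :
    (∫⁻ x, f x) * (∫⁻ y, g y) ≤ (∫⁻ z, h z) ^ 2 := by
  set fN : ℕ → ℝ → ℝ≥0∞ := fun N x => min (f x) (N : ℝ≥0∞) with hfN
  set gN : ℕ → ℝ → ℝ≥0∞ := fun N y => min (g y) (N : ℝ≥0∞) with hgN
  have hfNm : ∀ N, Measurable (fN N) := fun N => hf.min measurable_const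
  have hgNm : ∀ N, Measurable (gN N) := fun N => hg.min measurable_const
  have hcore : ∀ N M : ℕ, (∫⁻ x, fN N x) * (∫⁻ y, gN M y) ≤ (∫⁻ z, h z) ^ 2 := by
    intro N M
    refine pl1_core (fN N) (gN M) h (hfNm N) (hgNm M) hh ?_ ?_ ?_
    · exact ne_top_of_le_ne_top (ENNReal.natCast_ne_top N) (iSup_le fun x => min_le_right _ _)
    · exact ne_top_of_le_ne_top (ENNReal.natCast_ne_top M) (iSup_le fun y => min_le_right _ _)
    · intro x y
      exact le_trans (mul_le_mul' (min_le_left _ _) (min_le_left _ _)) (H x y)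
  have hFsup : ∫⁻ x, f x = ⨆ N : ℕ, ∫⁻ x, fN N x := by
    rw [← lintegral_iSup hfNm]
    · congr 1; funext x; exact (min_nat_sup (f x)).symm
    · intro N M hNM x
      exact min_le_min le_rfl (by exact_mod_cast Nat.cast_le.2 hNM)
  have hGsup : ∫⁻ y, g y = ⨆ M : ℕ, ∫⁻ y, gN M y := by
    rw [← lintegral_iSup hgNm]
    · congr 1; funext y; exact (min_nat_sup (g y)).symm
    · intro N M hNM y
      exact min_le_min le_rfl (by exact_mod_cast Nat.cast_le.2 hNM)
  rw [hFsup, hGsup, ENNReal.iSup_mul]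
  refine iSup_le fun N => ?_
  rw [ENNReal.mul_iSup]
  exact iSup_le fun M => hcore N M

lemma plProd (n : ℕ)
    (ih : ∀ f g h : (Fin n → ℝ) → ℝ≥0∞, Measurable f → Measurable g → Measurable h →
      (∀ x y, f x * g y ≤ h ((2:ℝ)⁻¹ • (x + y)) ^ 2) →
      (∫⁻ x, f x) * (∫⁻ y, g y) ≤ (∫⁻ z, h z) ^ 2)
    (f g h : ℝ × (Fin n → ℝ) → ℝ≥0∞) (hf : Measurable f) (hg : Measurable g)
    (hh : Measurable h)
    (H : ∀ p q, f p * g q ≤ h ((2:ℝ)⁻¹ • (p + q)) ^ 2) :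
    (∫⁻ p, f p) * (∫⁻ q, g q) ≤ (∫⁻ r, h r) ^ 2 := by
  set F : ℝ → ℝ≥0∞ := fun t => ∫⁻ u, f (t, u) with hFdef
  set G : ℝ → ℝ≥0∞ := fun t => ∫⁻ u, g (t, u) with hGdef
  set Hh : ℝ → ℝ≥0∞ := fun t => ∫⁻ u, h (t, u) with hHdef
  have hFm : Measurable F := Measurable.lintegral_prod_right hf
  have hGm : Measurable G := Measurable.lintegral_prod_right hg
  have hHm : Measurable Hh := Measurable.lintegral_prod_right hh
  have hcond : ∀ t s : ℝ, F t * G s ≤ Hh ((2:ℝ)⁻¹ • (t + s)) ^ 2 := by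
    intro t s
    refine ih (fun u => f (t, u)) (fun v => g (s, v))
      (fun w => h ((2:ℝ)⁻¹ • (t + s), w)) (hf.comp measurable_prodMk_left)
      (hg.comp measurable_prodMk_left) (hh.comp measurable_prodMk_left) ?_
    intro u v
    exact H (t, u) (s, v)
  have hkey := pl1 F G Hh hFm hGm hHm hcond
  have hif : ∫⁻ p, f p = ∫⁻ t, F t := by
    rw [Measure.volume_eq_prod, lintegral_prod f hf.aemeasurable]
  have hig : ∫⁻ q, g q = ∫⁻ t, G t := by
    rw [Measure.volume_eq_prod, lintegral_prod g hg.aemeasurable]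
  have hih : ∫⁻ r, h r = ∫⁻ t, Hh t := by
    rw [Measure.volume_eq_prod, lintegral_prod h hh.aemeasurable]
  rw [hif, hig, hih]
  exact hkey

theorem plPi (n : ℕ) : ∀ f g h : (Fin n → ℝ) → ℝ≥0∞, Measurable f → Measurable g →
    Measurable h → (∀ x y, f x * g y ≤ h ((2:ℝ)⁻¹ • (x + y)) ^ 2) →
    (∫⁻ x, f x) * (∫⁻ y, g y) ≤ (∫⁻ z, h z) ^ 2 := by
  induction n with
  | zero =>
    intro f g h hf hg hh H
    have huniv : (volume : Measure (Fin 0 → ℝ)) Set.univ = 1 := by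
      rw [volume_pi, Measure.pi_univ]
      simp
    have hl : ∀ F : (Fin 0 → ℝ) → ℝ≥0∞, ∫⁻ x, F x = F default := by
      intro F
      have h1 : ∀ x : Fin 0 → ℝ, F x = F default := fun x => congrArg F (Subsingleton.elim x default)
      calc ∫⁻ x, F x = ∫⁻ _ : Fin 0 → ℝ, F default := by simp_rw [h1]
        _ = F default * volume Set.univ := lintegral_const _
        _ = F default := by rw [huniv, mul_one]
    rw [hl f, hl g, hl h]
    have h2 := H default default
    have h3 : (2:ℝ)⁻¹ • ((default : Fin 0 → ℝ) + default) = default := Subsingleton.elim _ _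
    rwa [h3] at h2
  | succ n ih =>
    intro f g h hf hg hh H
    set e := MeasurableEquiv.piFinSuccAbove (fun _ : Fin (n+1) => ℝ) 0 with hedef
    have hmp : MeasurePreserving e volume volume :=
      volume_preserving_piFinSuccAbove (fun _ : Fin (n+1) => ℝ) 0
    have happ : ∀ z : Fin (n+1) → ℝ, e z = (z 0, fun j => z (Fin.succAbove 0 j)) := by
      intro z
      simp [hedef, MeasurableEquiv.piFinSuccAbove]
      rfl
    have helin : ∀ x y : Fin (n+1) → ℝ,
        e ((2:ℝ)⁻¹ • (x + y)) = (2:ℝ)⁻¹ • (e x + e y) := by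
      intro x y
      rw [happ, happ, happ]
      refine Prod.ext ?_ ?_
      · simp
      · funext j; simp [mul_add]
    set f' : ℝ × (Fin n → ℝ) → ℝ≥0∞ := fun p => f (e.symm p) with hf'def
    set g' : ℝ × (Fin n → ℝ) → ℝ≥0∞ := fun p => g (e.symm p) with hg'def
    set h' : ℝ × (Fin n → ℝ) → ℝ≥0∞ := fun p => h (e.symm p) with hh'def
    have H' : ∀ p q, f' p * g' q ≤ h' ((2:ℝ)⁻¹ • (p + q)) ^ 2 := by
      intro p q
      have he2 : e.symm ((2:ℝ)⁻¹ • (p + q)) = (2:ℝ)⁻¹ • (e.symm p + e.symm q) := by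
        have h4 := helin (e.symm p) (e.symm q)
        rw [e.apply_symm_apply, e.apply_symm_apply] at h4
        rw [← h4, e.symm_apply_apply]
      show f (e.symm p) * g (e.symm q) ≤ h (e.symm ((2:ℝ)⁻¹ • (p + q))) ^ 2
      rw [he2]
      exact H (e.symm p) (e.symm q)
    have hkey := plProd n ih f' g' h' (hf.comp e.symm.measurable)
      (hg.comp e.symm.measurable) (hh.comp e.symm.measurable) H'
    have hmps : MeasurePreserving e.symm volume volume := hmp.symm e
    rw [← hmps.lintegral_comp hf, ← hmps.lintegral_comp hg, ← hmps.lintegral_comp hh]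
    exact hkey

lemma multBM (n : ℕ) (A B : Set (Fin n → ℝ)) (hA : A.Nonempty) (hB : B.Nonempty)
    (hAc : IsCompact A) (hBc : IsCompact B) :
    volume A * volume B ≤ volume ((2:ℝ)⁻¹ • (A + B)) ^ 2 := by
  have hABc : IsCompact (A + B) := hAc.add hBc
  have hC : IsCompact ((2:ℝ)⁻¹ • (A + B)) := by
    rw [← Set.image_smul]
    exact hABc.image (continuous_const_smul _)
  have hAm : MeasurableSet A := hAc.measurableSet
  have hBm : MeasurableSet B := hBc.measurableSet
  have hCm : MeasurableSet ((2:ℝ)⁻¹ • (A + B)) := hC.measurableSet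
  have hPL := plPi n (A.indicator 1) (B.indicator 1) (((2:ℝ)⁻¹ • (A + B)).indicator 1)
    (measurable_one.indicator hAm) (measurable_one.indicator hBm)
    (measurable_one.indicator hCm) ?_
  · rwa [lintegral_indicator_one hAm, lintegral_indicator_one hBm,
      lintegral_indicator_one hCm] at hPL
  · intro x y
    by_cases hx : x ∈ A
    · by_cases hy : y ∈ B
      · have hm : (2:ℝ)⁻¹ • (x + y) ∈ (2:ℝ)⁻¹ • (A + B) :=
          Set.smul_mem_smul_set (Set.add_mem_add hx hy)
        rw [Set.indicator_of_mem hx, Set.indicator_of_mem hy, Set.indicator_of_mem hm]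
        simp
      · rw [Set.indicator_of_notMem hy, mul_zero]; exact zero_le
    · rw [Set.indicator_of_notMem hx, zero_mul]; exact zero_le

lemma slice_le (n : ℕ) (K D : Set (Fin n → ℝ)) (hKconv : Convex ℝ K) (hKcomp : IsCompact K)
    (hKsym : K = -K) (hDconv : Convex ℝ D) (hDcomp : IsCompact D) (hDsym : D = -D)
    (x : Fin n → ℝ) :
    volume (K ∩ (x +ᵥ D)) ≤ volume (K ∩ D) := by
  rcases Set.eq_empty_or_nonempty (K ∩ (x +ᵥ D)) with hA | hA
  · rw [hA]; simp
  set A := K ∩ (x +ᵥ D) with hAdef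
  have hxDc : IsCompact (x +ᵥ D) := by
    rw [← Set.image_vadd]
    exact hDcomp.image (continuous_const_vadd x)
  have hAc : IsCompact A := hKcomp.inter_right hxDc.isClosed
  have hsub : (2:ℝ)⁻¹ • (A + (-A)) ⊆ K ∩ D := by
    rintro z hz
    obtain ⟨w, hw, rfl⟩ := Set.mem_smul_set.1 hz
    obtain ⟨p, hp, q, hq, rfl⟩ := Set.mem_add.1 hw
    obtain ⟨hpK, hpD⟩ := hp
    obtain ⟨hqK', hqD'⟩ := Set.mem_neg.1 hq
    have hqK : q ∈ K := by
      rw [hKsym, Set.mem_neg]; exact hqK'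
    constructor
    · have hcx := hKconv hpK hqK (by norm_num : (0:ℝ) ≤ 2⁻¹) (by norm_num : (0:ℝ) ≤ 2⁻¹)
        (by norm_num)
      rwa [← smul_add] at hcx
    · obtain ⟨d₁, hd₁, hxd₁⟩ := Set.mem_vadd_set.1 hpD
      obtain ⟨d₂, hd₂, hxd₂⟩ := Set.mem_vadd_set.1 hqD'
      rw [vadd_eq_add] at hxd₁ hxd₂
      have hd₂' : (-d₂ : Fin n → ℝ) ∈ D := by
        rw [hDsym, Set.mem_neg, neg_neg]; exact hd₂
      have hcx := hDconv hd₁ hd₂' (by norm_num : (0:ℝ) ≤ 2⁻¹) (by norm_num : (0:ℝ) ≤ 2⁻¹)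
        (by norm_num)
      have heq : (2:ℝ)⁻¹ • (p + q) = (2:ℝ)⁻¹ • d₁ + (2:ℝ)⁻¹ • (-d₂) := by
        have hq' : q = -(x + d₂) := by rw [hxd₂, neg_neg]
        rw [← hxd₁, hq']
        module
      rwa [heq]
  have hBM := multBM n A (-A) hA hA.neg hAc hAc.neg
  rw [Measure.measure_neg] at hBM
  have hfin : volume (K ∩ D) ≤ volume A ∨ volume A ≤ volume (K ∩ D) := le_total _ _
  by_contra hcon
  push_neg at hcon
  have hsq : volume (K ∩ D) ^ 2 < volume A ^ 2 := ENNReal.pow_lt_pow_left two_ne_zero hcon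
  have : volume A ^ 2 ≤ volume (K ∩ D) ^ 2 := by
    calc volume A ^ 2 = volume A * volume A := sq (volume A) ▸ rfl
      _ ≤ volume ((2:ℝ)⁻¹ • (A + -A)) ^ 2 := hBM
      _ ≤ volume (K ∩ D) ^ 2 := pow_le_pow_left' (measure_mono hsub) 2
  exact absurd (lt_of_lt_of_le hsq this) (lt_irrefl _)

lemma interior_neg' {E : Type*} [NormedAddCommGroup E] (s : Set E) :
    interior (-s) = -interior s := by
  rw [← Set.image_neg_eq_neg, ← Set.image_neg_eq_neg]
  exact ((Homeomorph.neg E).image_interior s).symm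

lemma zero_mem_interior {E : Type*} [NormedAddCommGroup E] [NormedSpace ℝ E] {K : Set E}
    (hKconv : Convex ℝ K) (hKint : (interior K).Nonempty) (hKsym : K = -K) :
    (0 : E) ∈ interior K := by
  obtain ⟨x, hx⟩ := hKint
  have hx' : -x ∈ interior K := by
    have h1 : interior K = -interior K := by
      conv_lhs => rw [hKsym, interior_neg']
    rw [h1, Set.mem_neg, neg_neg]
    exact hx
  have h0 : (0 : E) = (2:ℝ)⁻¹ • x + (2:ℝ)⁻¹ • (-x) := by module
  rw [h0]
  exact hKconv.interior hx hx' (by norm_num) (by norm_num) (by norm_num)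

/-- Covering number: minimum number of translates of `B` needed to cover `A`. -/
noncomputable def covN {n : ℕ} (A B : Set (Fin n → ℝ)) : ℕ :=
  sInf {k | ∃ t : Finset (Fin n → ℝ), t.card = k ∧ A ⊆ ⋃ x ∈ t, x +ᵥ B}

theorem stmt0 (n : ℕ) (K D : Set (Fin n → ℝ))
    (hKconv : Convex ℝ K) (hKcomp : IsCompact K) (hKint : (interior K).Nonempty)
    (hKsym : K = -K)
    (hDconv : Convex ℝ D) (hDcomp : IsCompact D) (hDint : (interior D).Nonempty)
    (hDsym : D = -D) :
    volume K / volume (K ∩ D) ≤ (covN K D : ENNReal) ∧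
      (covN K D : ENNReal) ≤ 3 ^ n * (volume K / volume (K ∩ D)) := by
  classical
  have hK0 : (0 : Fin n → ℝ) ∈ interior K := zero_mem_interior hKconv hKint hKsym
  have hD0 : (0 : Fin n → ℝ) ∈ interior D := zero_mem_interior hDconv hDint hDsym
  set B := K ∩ D with hBdef
  have hB0 : (0 : Fin n → ℝ) ∈ interior B := by
    rw [hBdef, interior_inter]; exact ⟨hK0, hD0⟩
  have hB0m : (0 : Fin n → ℝ) ∈ B := interior_subset hB0
  have hBconv : Convex ℝ B := hKconv.inter hDconv
  have hBcomp : IsCompact B := hKcomp.inter_right hDcomp.isClosed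
  have hBsub : B ⊆ D := Set.inter_subset_right
  have hBK : B ⊆ K := Set.inter_subset_left
  have hBsym : ∀ w ∈ B, -w ∈ B := by
    rintro w ⟨hw1, hw2⟩
    constructor
    · rw [hKsym, Set.mem_neg, neg_neg]; exact hw1
    · rw [hDsym, Set.mem_neg, neg_neg]; exact hw2
  set U := (2:ℝ)⁻¹ • interior B with hUdef
  have hUopen : IsOpen U := isOpen_interior.smul₀ (by norm_num)
  have hUne : U.Nonempty := ⟨(2:ℝ)⁻¹ • 0, Set.smul_mem_smul_set hB0⟩
  have hUB : U ⊆ B := by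
    rintro _ ⟨w, hw, rfl⟩
    have h1 := hBconv (interior_subset hw) hB0m (by norm_num : (0:ℝ) ≤ 2⁻¹)
      (by norm_num : (0:ℝ) ≤ 2⁻¹) (by norm_num)
    rwa [smul_zero, add_zero] at h1
  have hvolB_pos : 0 < volume B := by
    have h1 : 0 < volume (interior B) := isOpen_interior.measure_pos volume ⟨0, hB0⟩
    exact lt_of_lt_of_le h1 (measure_mono interior_subset)
  have hvolK_ne_top : volume K ≠ ⊤ := hKcomp.measure_lt_top.ne
  have hvolB_ne_top : volume B ≠ ⊤ :=
    (lt_of_le_of_lt (measure_mono hBK) hKcomp.measure_lt_top).ne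
  have hintB_vol : volume (interior B) = volume B := by
    refine le_antisymm (measure_mono interior_subset) ?_
    calc volume B ≤ volume (closure B) := measure_mono subset_closure
      _ = volume (interior B ∪ frontier B) := by rw [closure_eq_interior_union_frontier]
      _ ≤ volume (interior B) + volume (frontier B) := measure_union_le _ _
      _ = volume (interior B) := by rw [Convex.addHaar_frontier volume hBconv, add_zero]
  have hvolU : volume U = ENNReal.ofReal ((2:ℝ)⁻¹ ^ n) * volume B := by
    rw [hUdef, Measure.addHaar_smul, hintB_vol]
    congr 2
    rw [Module.finrank_fin_fun, abs_of_pos (by positivity)]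
  have hvolU_pos : 0 < volume U := hUopen.measure_pos volume hUne
  have hvolU_ne_top : volume U ≠ ⊤ :=
    ne_top_of_le_ne_top hvolB_ne_top (measure_mono hUB)
  -- C bound from packing
  set C := ENNReal.ofReal ((3/2:ℝ) ^ n) * volume K with hCdef
  have hCne : C ≠ ⊤ := ENNReal.mul_ne_top ENNReal.ofReal_ne_top hvolK_ne_top
  have hUmeas : ∀ y : Fin n → ℝ, MeasurableSet (y +ᵥ U) := by
    intro y
    rw [← Set.image_vadd]
    exact (((Homeomorph.addLeft y).isOpen_image).2 hUopen).measurableSet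
  have hpack : ∀ t : Finset (Fin n → ℝ), (↑t ⊆ K) →
      ((t : Set (Fin n → ℝ)).PairwiseDisjoint fun y => y +ᵥ U) →
      (t.card : ℝ≥0∞) * volume U ≤ C := by
    intro t htK htd
    have hdis : volume (⋃ y ∈ t, y +ᵥ U) = ∑ y ∈ t, volume (y +ᵥ U) :=
      measure_biUnion_finset htd fun y _ => hUmeas y
    have hsum : ∑ y ∈ t, volume (y +ᵥ U) = (t.card : ℝ≥0∞) * volume U := by
      rw [Finset.sum_congr rfl fun y _ => measure_vadd volume y U, Finset.sum_const,
        nsmul_eq_mul]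
    have hsub32 : (⋃ y ∈ t, y +ᵥ U) ⊆ (3/2 : ℝ) • K := by
      intro z hz
      obtain ⟨y, hy, hzy⟩ := Set.mem_iUnion₂.1 hz
      obtain ⟨u, hu, rfl⟩ := Set.mem_vadd_set.1 hzy
      obtain ⟨w, hw, rfl⟩ := Set.mem_smul_set.1 hu
      have hyK : y ∈ K := htK hy
      have hwK : w ∈ K := hBK (interior_subset hw)
      have hmem : (2/3:ℝ) • y + (1/3:ℝ) • w ∈ K :=
        hKconv hyK hwK (by norm_num) (by norm_num) (by norm_num)
      refine Set.mem_smul_set.2 ⟨(2/3:ℝ) • y + (1/3:ℝ) • w, hmem, ?_⟩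
      rw [vadd_eq_add]
      module
    calc (t.card : ℝ≥0∞) * volume U = volume (⋃ y ∈ t, y +ᵥ U) := by rw [hdis, hsum]
      _ ≤ volume ((3/2 : ℝ) • K) := measure_mono hsub32
      _ = C := by
          rw [Measure.addHaar_smul, hCdef]
          congr 2
          rw [Module.finrank_fin_fun, abs_of_pos (by positivity)]
  -- maximal packing
  set S : Set ℕ := {k | ∃ t : Finset (Fin n → ℝ),
    ((↑t : Set (Fin n → ℝ)) ⊆ K ∧ (↑t : Set (Fin n → ℝ)).PairwiseDisjoint fun y => y +ᵥ U)
      ∧ t.card = k} with hSdef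
  have hS0 : 0 ∈ S := ⟨∅, ⟨by simp, by simp⟩, rfl⟩
  obtain ⟨N₀, hN₀⟩ := ENNReal.exists_nat_gt ((ENNReal.div_lt_top hCne hvolU_pos.ne').ne)
  have hSbdd : BddAbove S := by
    refine ⟨N₀, ?_⟩
    rintro k ⟨t, ⟨htK, htd⟩, rfl⟩
    have h1 : (t.card : ℝ≥0∞) ≤ C / volume U :=
      (ENNReal.le_div_iff_mul_le (Or.inl hvolU_pos.ne') (Or.inl hvolU_ne_top)).2
        (hpack t htK htd)
    have h2 : (t.card : ℝ≥0∞) < (N₀ : ℝ≥0∞) := lt_of_le_of_lt h1 hN₀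
    exact (Nat.cast_lt.1 h2).le
  set m := sSup S with hmdef
  have hmS : m ∈ S := Nat.sSup_mem ⟨0, hS0⟩ hSbdd
  obtain ⟨t₀, ⟨ht₀K, ht₀d⟩, ht₀card⟩ := hmS
  -- maximality gives covering
  have hcover : K ⊆ ⋃ y ∈ t₀, y +ᵥ B := by
    by_contra hnc
    obtain ⟨y₀, hy₀K, hy₀n⟩ := Set.not_subset.1 hnc
    have hy₀B : ∀ y ∈ t₀, y₀ ∉ y +ᵥ B := fun y hy hmem =>
      hy₀n (Set.mem_biUnion hy hmem)
    have hself : y₀ ∈ y₀ +ᵥ B := Set.mem_vadd_set.2 ⟨0, hB0m, by rw [vadd_eq_add, add_zero]⟩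
    have hnotmem : y₀ ∉ t₀ := fun hmem => hy₀B y₀ hmem hself
    have hdisj : ∀ y ∈ (↑t₀ : Set (Fin n → ℝ)), Disjoint (y₀ +ᵥ U) (y +ᵥ U) := by
      intro y hy
      rw [Set.disjoint_left]
      rintro z hz1 hz2
      obtain ⟨u₁, hu₁, hzu₁⟩ := Set.mem_vadd_set.1 hz1
      obtain ⟨u₂, hu₂, hzu₂⟩ := Set.mem_vadd_set.1 hz2
      rw [vadd_eq_add] at hzu₁ hzu₂
      obtain ⟨w₁, hw₁, rfl⟩ := Set.mem_smul_set.1 hu₁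
      obtain ⟨w₂, hw₂, rfl⟩ := Set.mem_smul_set.1 hu₂
      have h5 : y₀ + (2:ℝ)⁻¹ • w₁ = y + (2:ℝ)⁻¹ • w₂ := hzu₁.trans hzu₂.symm
      have h6 : y₀ = y + (2:ℝ)⁻¹ • w₂ - (2:ℝ)⁻¹ • w₁ := eq_sub_of_add_eq h5
      have hyb : y₀ ∈ y +ᵥ B := by
        refine Set.mem_vadd_set.2 ⟨(2:ℝ)⁻¹ • w₂ + (2:ℝ)⁻¹ • (-w₁), ?_, ?_⟩
        · have := hBconv (interior_subset hw₂) (hBsym _ (interior_subset hw₁))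
            (by norm_num : (0:ℝ) ≤ 2⁻¹) (by norm_num : (0:ℝ) ≤ 2⁻¹) (by norm_num)
          exact this
        · rw [vadd_eq_add, h6]
          module
      exact hy₀B y hy hyb
    have ht₁K : (↑(insert y₀ t₀) : Set (Fin n → ℝ)) ⊆ K := by
      rw [Finset.coe_insert]
      exact Set.insert_subset hy₀K ht₀K
    have ht₁d : (↑(insert y₀ t₀) : Set (Fin n → ℝ)).PairwiseDisjoint fun y => y +ᵥ U := by
      rw [Finset.coe_insert]
      exact ht₀d.insert fun y hy _ => hdisj y hy
    have hc : (insert y₀ t₀).card = m + 1 := by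
      rw [Finset.card_insert_of_notMem hnotmem, ht₀card]
    have hmem1 : m + 1 ∈ S := ⟨insert y₀ t₀, ⟨ht₁K, ht₁d⟩, hc⟩
    have := le_csSup hSbdd hmem1
    omega
  have hcoverD : K ⊆ ⋃ y ∈ t₀, y +ᵥ D :=
    hcover.trans (Set.iUnion₂_mono fun y _ => Set.vadd_set_mono hBsub)
  -- covN bounds
  have hcovN_le : covN K D ≤ m := by
    rw [← ht₀card]
    exact Nat.sInf_le ⟨t₀, rfl, hcoverD⟩
  have hSne : {k | ∃ t : Finset (Fin n → ℝ), t.card = k ∧ K ⊆ ⋃ x ∈ t, x +ᵥ D}.Nonempty :=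
    ⟨t₀.card, t₀, rfl, hcoverD⟩
  obtain ⟨t₁, ht₁card, ht₁cov⟩ := Nat.sInf_mem hSne
  -- lower bound
  have hslice : ∀ y : Fin n → ℝ, volume (K ∩ (y +ᵥ D)) ≤ volume B :=
    fun y => slice_le n K D hKconv hKcomp hKsym hDconv hDcomp hDsym y
  have hlow : volume K ≤ (covN K D : ℝ≥0∞) * volume B := by
    have hdecomp : K = ⋃ y ∈ t₁, K ∩ (y +ᵥ D) := by
      apply Set.Subset.antisymm
      · intro z hz
        obtain ⟨y, hy, hzy⟩ := Set.mem_iUnion₂.1 (ht₁cov hz)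
        exact Set.mem_iUnion₂.2 ⟨y, hy, hz, hzy⟩
      · exact Set.iUnion₂_subset fun y _ => Set.inter_subset_left
    calc volume K = volume (⋃ y ∈ t₁, K ∩ (y +ᵥ D)) := by rw [← hdecomp]
      _ ≤ ∑ y ∈ t₁, volume (K ∩ (y +ᵥ D)) := measure_biUnion_finset_le t₁ _
      _ ≤ ∑ _y ∈ t₁, volume B := Finset.sum_le_sum fun y _ => hslice y
      _ = t₁.card • volume B := Finset.sum_const _
      _ = (t₁.card : ℝ≥0∞) * volume B := nsmul_eq_mul _ _
      _ = (covN K D : ℝ≥0∞) * volume B := by rw [ht₁card]; rfl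
  constructor
  · exact (ENNReal.div_le_iff_le_mul (Or.inl hvolB_pos.ne') (Or.inl hvolB_ne_top)).2 hlow
  · -- upper bound
    have h1 : (covN K D : ℝ≥0∞) * volume U ≤ C := by
      refine le_trans (mul_le_mul_left (Nat.cast_le.2 hcovN_le) _) ?_
      rw [← ht₀card]
      exact hpack t₀ ht₀K ht₀d
    rw [hvolU] at h1
    have h2 : ((covN K D : ℝ≥0∞) * (ENNReal.ofReal ((2:ℝ)⁻¹ ^ n) * volume B))
        * ENNReal.ofReal ((2:ℝ) ^ n) ≤ C * ENNReal.ofReal ((2:ℝ) ^ n) :=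
      mul_le_mul_left h1 _
    have hcancel : ENNReal.ofReal ((2:ℝ)⁻¹ ^ n) * ENNReal.ofReal ((2:ℝ) ^ n) = 1 := by
      rw [← ENNReal.ofReal_mul (by positivity), ← mul_pow]
      norm_num
    have hLHS : ((covN K D : ℝ≥0∞) * (ENNReal.ofReal ((2:ℝ)⁻¹ ^ n) * volume B))
        * ENNReal.ofReal ((2:ℝ) ^ n)
        = (covN K D : ℝ≥0∞) * volume B
          * (ENNReal.ofReal ((2:ℝ)⁻¹ ^ n) * ENNReal.ofReal ((2:ℝ) ^ n)) := by ring
    have hRHS : C * ENNReal.ofReal ((2:ℝ) ^ n) = (3:ℝ≥0∞) ^ n * volume K := by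
      rw [hCdef]
      have h3 : ENNReal.ofReal ((3/2:ℝ) ^ n) * volume K * ENNReal.ofReal ((2:ℝ) ^ n)
          = (ENNReal.ofReal ((3/2:ℝ) ^ n) * ENNReal.ofReal ((2:ℝ) ^ n)) * volume K := by ring
      rw [h3, ← ENNReal.ofReal_mul (by positivity), ← mul_pow]
      norm_num
    have h4 : (covN K D : ℝ≥0∞) * volume B ≤ (3:ℝ≥0∞) ^ n * volume K := by
      calc (covN K D : ℝ≥0∞) * volume B
          = (covN K D : ℝ≥0∞) * volume B
            * (ENNReal.ofReal ((2:ℝ)⁻¹ ^ n) * ENNReal.ofReal ((2:ℝ) ^ n)) := by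
            rw [hcancel, mul_one]
        _ = ((covN K D : ℝ≥0∞) * (ENNReal.ofReal ((2:ℝ)⁻¹ ^ n) * volume B))
            * ENNReal.ofReal ((2:ℝ) ^ n) := hLHS.symm
        _ ≤ C * ENNReal.ofReal ((2:ℝ) ^ n) := h2
        _ = (3:ℝ≥0∞) ^ n * volume K := hRHS
    rw [mul_div_assoc] at *
    rw [← mul_div_assoc]
    exact (ENNReal.le_div_iff_mul_le (Or.inl hvolB_pos.ne') (Or.inl hvolB_ne_top)).2 h4
end

section
/- Let α be a norm on R^{n×n}, and let A_OPT maximize det(A) over positive definite matrices A with α(A) ≤ 1, with det(A_OPT) > 0. Then for every T ∈ R^{n×n} with α(T) ≤ 1 such that A_OPT + δT ⪰ 0 for all sufficiently small δ > 0, we have tr(A_OPT^{-1} T) ≤ n. -/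
open Matrix Polynomial Filter

lemma psd_smul_aux {n : ℕ} {B : Matrix (Fin n) (Fin n) ℝ} (h : B.PosSemidef) {c : ℝ}
    (hc : 0 ≤ c) : (c • B).PosSemidef := by
  refine ⟨?_, fun x => ?_⟩
  · show (c • B)ᴴ = c • B
    rw [conjTranspose_smul, star_trivial, h.1]
  · have hx := smul_nonneg hc (h.2 x)
    simp only [smul_eq_mul, Finsupp.mul_sum] at hx
    refine le_of_le_of_eq hx ?_
    congr 1; funext i xi; congr 1; funext j xj
    simp only [Matrix.smul_apply, smul_eq_mul, star_trivial]; ring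

theorem stmt5 (n : ℕ) (α : Matrix (Fin n) (Fin n) ℝ → ℝ)
    (hα_add : ∀ S T, α (S + T) ≤ α S + α T)
    (hα_smul : ∀ (c : ℝ) T, α (c • T) = |c| * α T)
    (hα_pos : ∀ T, α T = 0 → T = 0)
    (Aopt : Matrix (Fin n) (Fin n) ℝ)
    (hApd : Aopt.PosDef) (hAfeas : α Aopt ≤ 1) (hAdet : 0 < Aopt.det)
    (hAopt : ∀ B : Matrix (Fin n) (Fin n) ℝ, B.PosSemidef → α B ≤ 1 → B.det ≤ Aopt.det)
    (T : Matrix (Fin n) (Fin n) ℝ) (hT : α T ≤ 1)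
    (hTpert : ∃ δ₀ > 0, ∀ δ : ℝ, 0 < δ → δ ≤ δ₀ → (Aopt + δ • T).PosSemidef) :
    (Aopt⁻¹ * T).trace ≤ n := by
  obtain ⟨δ₀, hδ₀, hpert⟩ := hTpert
  set M : Matrix (Fin n) (Fin n) ℝ := Aopt⁻¹ * T with hM
  have hunit : IsUnit Aopt.det := isUnit_iff_ne_zero.mpr (ne_of_gt hAdet)
  -- Key inequality: for δ ∈ (0, δ₀], det (1 + δ • M) ≤ (1+δ)^n
  have key : ∀ δ : ℝ, 0 < δ → δ ≤ δ₀ → (1 + δ • M).det ≤ (1 + δ)^n := by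
    intro δ hδ hδle
    have h1δ : (0:ℝ) < 1 + δ := by linarith
    set B := (1 + δ)⁻¹ • (Aopt + δ • T) with hB
    have hBpsd : B.PosSemidef := psd_smul_aux (hpert δ hδ hδle) (le_of_lt (inv_pos.mpr h1δ))
    have hBα : α B ≤ 1 := by
      have h1 : α (Aopt + δ • T) ≤ 1 + δ := by
        calc α (Aopt + δ • T) ≤ α Aopt + α (δ • T) := hα_add _ _
        _ = α Aopt + |δ| * α T := by rw [hα_smul]
        _ = α Aopt + δ * α T := by rw [abs_of_pos hδ]
        _ ≤ 1 + δ * 1 := by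
            have := mul_le_mul_of_nonneg_left hT (le_of_lt hδ)
            linarith
        _ = 1 + δ := by ring
      calc α B = |(1 + δ)⁻¹| * α (Aopt + δ • T) := hα_smul _ _
      _ = (1 + δ)⁻¹ * α (Aopt + δ • T) := by rw [abs_of_pos (inv_pos.mpr h1δ)]
      _ ≤ (1 + δ)⁻¹ * (1 + δ) := by
          exact mul_le_mul_of_nonneg_left h1 (le_of_lt (inv_pos.mpr h1δ))
      _ = 1 := inv_mul_cancel₀ (ne_of_gt h1δ)
    have hdetB : B.det ≤ Aopt.det := hAopt B hBpsd hBα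
    have hBdet : B.det = ((1 + δ)⁻¹)^n * (Aopt + δ • T).det := by
      rw [hB, det_smul]; simp
    have hfact : Aopt + δ • T = Aopt * (1 + δ • M) := by
      rw [Matrix.mul_add, mul_one, Matrix.mul_smul, hM,
        Matrix.mul_nonsing_inv_cancel_left _ _ hunit]
    have hdet2 : (Aopt + δ • T).det = Aopt.det * (1 + δ • M).det := by
      rw [hfact, det_mul]
    rw [hBdet, hdet2] at hdetB
    have h2 : Aopt.det * (1 + δ • M).det ≤ ((1 + δ)^n) * Aopt.det := by
      have hp : (0:ℝ) < ((1 + δ)⁻¹)^n * ((1+δ)^n) := by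
        rw [← mul_pow, inv_mul_cancel₀ (ne_of_gt h1δ)]; simp
      have := mul_le_mul_of_nonneg_left hdetB (le_of_lt (pow_pos h1δ n))
      calc Aopt.det * (1 + δ • M).det
          = (1+δ)^n * (((1 + δ)⁻¹)^n * (Aopt.det * (1 + δ • M).det)) := by
            rw [← mul_assoc, ← mul_pow, mul_inv_cancel₀ (ne_of_gt h1δ)]; simp
      _ ≤ (1+δ)^n * Aopt.det := this
    have := (mul_le_mul_iff_right₀ hAdet).mp (by linarith [h2] : Aopt.det * (1 + δ • M).det ≤ Aopt.det * ((1+δ)^n))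
    exact this
  -- Now the first-order argument.
  set P : Polynomial ℝ := ((1 + (X : ℝ[X]) • M.map C).det).divX.divX with hP
  have hdetexp : ∀ δ : ℝ, (1 + δ • M).det = 1 + M.trace * δ + P.eval δ * δ^2 :=
    fun δ => Matrix.det_one_add_smul δ M
  -- f δ = (1+δ)^n - det(1 + δ M) ≥ 0 for δ ∈ (0, δ₀], f 0 = 0, f'(0) = n - tr M.
  set f : ℝ → ℝ := fun δ => (1 + δ)^n - (1 + M.trace * δ + P.eval δ * δ^2) with hf
  have hf0 : f 0 = 0 := by simp [hf]
  have hderiv : HasDerivAt f ((n : ℝ) - M.trace) 0 := by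
    have h1 : HasDerivAt (fun δ : ℝ => (1 + δ)^n) ((n:ℝ) * (1+(0:ℝ))^(n-1) * 1) 0 := by
      exact ((hasDerivAt_id (0:ℝ)).const_add 1).pow n
    have h2 : HasDerivAt (fun δ : ℝ => 1 + M.trace * δ + P.eval δ * δ^2)
        (0 + M.trace * 1 + (P.derivative.eval 0 * 0^2 + P.eval 0 * (2 * 0))) 0 := by
      have hc : HasDerivAt (fun δ : ℝ => M.trace * δ) (M.trace * 1) 0 :=
        (hasDerivAt_id 0).const_mul M.trace
      have hp : HasDerivAt (fun δ : ℝ => P.eval δ) (P.derivative.eval 0) 0 :=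
        P.hasDerivAt 0
      have hsq : HasDerivAt (fun δ : ℝ => δ^2) (2 * 0) 0 := by
        simpa using (hasDerivAt_pow 2 (0:ℝ))
      exact ((hasDerivAt_const 0 (1:ℝ)).add hc).add (hp.mul hsq)
    have := h1.sub h2
    exact this.congr_deriv (by push_cast; ring)
  -- slope limit from the right
  have hslope : Tendsto (fun δ => f δ / δ) (nhdsWithin 0 (Set.Ioi 0)) (nhds ((n:ℝ) - M.trace)) := by
    have := hasDerivAt_iff_tendsto_slope.mp hderiv
    have hsub : nhdsWithin (0:ℝ) (Set.Ioi 0) ≤ nhdsWithin 0 {(0:ℝ)}ᶜ := by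
      apply nhdsWithin_mono
      intro x hx
      exact ne_of_gt hx
    have h2 := this.mono_left hsub
    refine h2.congr' ?_
    filter_upwards [self_mem_nhdsWithin] with x hx
    simp [slope, hf0, div_eq_inv_mul]
  have hnonneg : ∀ᶠ δ in nhdsWithin (0:ℝ) (Set.Ioi 0), 0 ≤ f δ / δ := by
    filter_upwards [Ioo_mem_nhdsGT_of_mem (Set.left_mem_Ico.mpr hδ₀)] with δ hδ
    obtain ⟨hδ1, hδ2⟩ := hδ
    have hkey := key δ hδ1 (le_of_lt hδ2)
    rw [hdetexp δ] at hkey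
    have : 0 ≤ f δ := by simp [hf]; linarith
    exact div_nonneg this (le_of_lt hδ1)
  have hlim : 0 ≤ (n:ℝ) - M.trace := by
    have hne : (nhdsWithin (0:ℝ) (Set.Ioi 0)).NeBot := nhdsGT_neBot 0
    exact ge_of_tendsto hslope hnonneg
  linarith
end

section
/- Let A_OPT ≻ 0 be the optimizer of max{det(A) : A ⪰ 0, α(A) ≤ 1} where α(T) ≤ ‖T‖_F for all T. Then the operator norm of A_OPT^{-1} satisfies ‖A_OPT^{-1}‖_2 ≤ n. -/
open Matrix Topology

noncomputable def frob {n : ℕ} (T : Matrix (Fin n) (Fin n) ℝ) : ℝ :=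
  Real.sqrt (∑ i, ∑ j, T i j ^ 2)

lemma smul_psd {n : ℕ} {c : ℝ} (hc : 0 ≤ c) {M : Matrix (Fin n) (Fin n) ℝ}
    (hM : M.PosSemidef) : (c • M).PosSemidef := by
  refine PosSemidef.of_dotProduct_mulVec_nonneg ?_ (fun x => ?_)
  · unfold Matrix.IsHermitian
    rw [conjTranspose_smul, hM.isHermitian.eq]
    simp
  · have := hM.dotProduct_mulVec_nonneg x
    simp only [smul_mulVec, dotProduct_smul, smul_eq_mul]
    positivity


lemma limit_le {q : ℝ} {n : ℕ} (h : ∀ t : ℝ, 0 < t → 1 + t * q ≤ (1 + t) ^ n) : q ≤ n := by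
  have hder : HasDerivAt (fun t : ℝ => (1 + t) ^ n) (n : ℝ) 0 := by
    have h1 : HasDerivAt (fun t : ℝ => 1 + t) 1 0 := (hasDerivAt_id 0).const_add 1
    have := h1.pow n
    simpa [Pi.pow_def] using this
  have hslope := hasDerivAt_iff_tendsto_slope.mp hder
  have hsub : 𝓝[>] (0:ℝ) ≤ 𝓝[≠] (0:ℝ) :=
    nhdsWithin_mono _ (fun t ht => ne_of_gt ht)
  have htend := hslope.mono_left hsub
  refine ge_of_tendsto htend ?_
  filter_upwards [self_mem_nhdsWithin] with t ht
  have ht' : (0:ℝ) < t := ht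
  rw [slope_def_field]
  simp only [sub_zero, add_zero, one_pow]
  rw [le_div_iff₀ ht']
  nlinarith [h t ht']


lemma key_bound (n : ℕ) (α : Matrix (Fin n) (Fin n) ℝ → ℝ)
    (hα_add : ∀ S T, α (S + T) ≤ α S + α T)
    (hα_smul : ∀ (c : ℝ) T, α (c • T) = |c| * α T)
    (hαF : ∀ T, α T ≤ frob T)
    (Aopt : Matrix (Fin n) (Fin n) ℝ)
    (hApd : Aopt.PosDef) (hAfeas : α Aopt ≤ 1)
    (hAopt : ∀ B : Matrix (Fin n) (Fin n) ℝ, B.PosSemidef → α B ≤ 1 → B.det ≤ Aopt.det)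
    (x : Fin n → ℝ) (hx : x ⬝ᵥ x = 1) : x ⬝ᵥ (Aopt⁻¹ *ᵥ x) ≤ n := by
  set q := x ⬝ᵥ (Aopt⁻¹ *ᵥ x) with hq
  set P : Matrix (Fin n) (Fin n) ℝ := vecMulVec x x with hP
  have hdetpos : 0 < Aopt.det := hApd.det_pos
  have hPps : P.PosSemidef := by
    have h := Matrix.posSemidef_conjTranspose_mul_self (replicateRow Unit x)
    have he' : (replicateRow Unit x)ᴴ = replicateCol Unit x := by
      ext i j
      simp [conjTranspose_apply]
    rw [he'] at h
    rw [hP, vecMulVec_eq Unit]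
    exact h
  have hx2 : ∑ i, x i ^ 2 = 1 := by
    simpa [dotProduct, sq] using hx
  have hfrobP : frob P = 1 := by
    have : ∑ i, ∑ j, P i j ^ 2 = 1 := by
      simp only [hP, vecMulVec_apply, mul_pow, ← Finset.mul_sum]
      rw [← Finset.sum_mul, hx2]
      simp [hx2]
    rw [frob, this, Real.sqrt_one]
  have hαP : α P ≤ 1 := le_trans (hαF P) (le_of_eq hfrobP)
  refine limit_le (n := n) ?_
  intro t ht
  have h1t : (0:ℝ) < 1 + t := by linarith
  set B := (1 + t)⁻¹ • (Aopt + t • P) with hB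
  have hBps : B.PosSemidef :=
    smul_psd (by positivity) ((hApd.posSemidef).add (smul_psd ht.le hPps))
  have hBα : α B ≤ 1 := by
    rw [hB, hα_smul]
    have h2 := hα_add Aopt (t • P)
    rw [hα_smul] at h2
    have h3 : α (Aopt + t • P) ≤ 1 + t := by
      calc α (Aopt + t • P) ≤ α Aopt + |t| * α P := h2
        _ ≤ 1 + t * 1 := by
            rw [abs_of_pos ht]
            have : t * α P ≤ t * 1 := by
              apply mul_le_mul_of_nonneg_left hαP ht.le
            linarith
        _ = 1 + t := by ring
    rw [abs_of_pos (by positivity : (0:ℝ) < (1+t)⁻¹)]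
    calc (1 + t)⁻¹ * α (Aopt + t • P) ≤ (1 + t)⁻¹ * (1 + t) := by
          apply mul_le_mul_of_nonneg_left h3 (by positivity)
      _ = 1 := by field_simp
  have hdetP : (Aopt + t • P).det = Aopt.det * (1 + t * q) := by
    have hu : IsUnit Aopt.det := isUnit_iff_ne_zero.mpr (ne_of_gt hdetpos)
    have h1 : t • P = replicateCol Unit (t • x) * replicateRow Unit x := by
      rw [hP, ← vecMulVec_eq]
      ext i j
      simp [vecMulVec_apply, mul_assoc]
    rw [h1, det_add_replicateCol_mul_replicateRow hu]
    congr 1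
    rw [det_unique]
    simp only [Matrix.add_apply, Matrix.one_apply_eq, Matrix.mul_apply, Matrix.replicateRow_apply,
      Matrix.replicateCol_apply, mulVec, dotProduct, Finset.mul_sum, Finset.sum_mul]
    congr 1
    rw [hq]
    simp only [mulVec, dotProduct, Pi.smul_apply, smul_eq_mul, Finset.mul_sum]
    rw [Finset.sum_comm]
    apply Finset.sum_congr rfl; intro i _
    apply Finset.sum_congr rfl; intro j _
    ring
  have hBdet : B.det = ((1 + t)⁻¹) ^ n * (Aopt.det * (1 + t * q)) := by
    rw [hB, det_smul, hdetP]
    simp [Fintype.card_fin]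
  have hle := hAopt B hBps hBα
  rw [hBdet] at hle
  have hpow : (0:ℝ) < (1 + t) ^ n := by positivity
  have h4 : Aopt.det * (1 + t * q) ≤ Aopt.det * (1 + t) ^ n := by
    have := hle
    rw [inv_pow] at this
    calc Aopt.det * (1 + t * q) = (1 + t) ^ n * (((1 + t) ^ n)⁻¹ * (Aopt.det * (1 + t * q))) := by
          field_simp
      _ ≤ (1 + t) ^ n * Aopt.det := by
          apply mul_le_mul_of_nonneg_left this hpow.le
      _ = Aopt.det * (1 + t) ^ n := by ring
  exact le_of_mul_le_mul_left (by linarith [h4]) hdetpos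

open scoped MatrixOrder in
lemma norm_bound {n : ℕ} {M : Matrix (Fin n) (Fin n) ℝ} (hM : M.PosSemidef)
    (hkey : ∀ x : Fin n → ℝ, x ⬝ᵥ x = 1 → x ⬝ᵥ (M *ᵥ x) ≤ n) :
    ‖toEuclideanCLM (𝕜 := ℝ) M‖ ≤ n := by
  have hMt : Mᵀ = M := by
    have h1 : Mᴴ = Mᵀ := by ext i j; simp [conjTranspose_apply]
    rw [← h1, hM.isHermitian.eq]
  -- quadratic bound for all x
  have hquad : ∀ x : Fin n → ℝ, x ⬝ᵥ (M *ᵥ x) ≤ n * (x ⬝ᵥ x) := by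
    intro x
    by_cases hx0 : x = 0
    · simp [hx0]
    · have hpos : 0 < x ⬝ᵥ x := by
        have h := dotProduct_self_star_pos_iff (v := x).mpr hx0
        simpa using h
      set c := Real.sqrt (x ⬝ᵥ x) with hc
      have hcpos : 0 < c := Real.sqrt_pos.mpr hpos
      have hc2 : c ^ 2 = x ⬝ᵥ x := Real.sq_sqrt hpos.le
      have h1 : (c⁻¹ • x) ⬝ᵥ (c⁻¹ • x) = 1 := by
        simp only [smul_dotProduct, dotProduct_smul, smul_eq_mul]
        field_simp
        nlinarith [hc2]
      have h2 := hkey (c⁻¹ • x) h1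
      rw [mulVec_smul, smul_dotProduct, dotProduct_smul] at h2
      rw [smul_eq_mul, smul_eq_mul] at h2
      have h4 := mul_le_mul_of_nonneg_left h2 (by positivity : (0:ℝ) ≤ c ^ 2)
      have h5 : c ^ 2 * (c⁻¹ * (c⁻¹ * (x ⬝ᵥ M *ᵥ x))) = x ⬝ᵥ M *ᵥ x := by
        field_simp
      rw [h5] at h4
      rw [← hc2]
      linarith
  -- N = n•1 - M is PosSemidef
  have hN : (((n:ℝ)) • (1 : Matrix (Fin n) (Fin n) ℝ) - M).PosSemidef := by
    refine PosSemidef.of_dotProduct_mulVec_nonneg ?_ (fun x => ?_)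
    · unfold Matrix.IsHermitian
      rw [conjTranspose_sub, conjTranspose_smul, conjTranspose_one, hM.isHermitian.eq]
      simp
    · have := hquad x
      simp only [star_trivial, sub_mulVec, smul_mulVec, one_mulVec, dotProduct_sub,
        dotProduct_smul, smul_eq_mul]
      linarith
  -- K = n•1 + M, S = sqrt K
  set K : Matrix (Fin n) (Fin n) ℝ := (n:ℝ) • 1 + M with hKdef
  have hK : K.PosSemidef := (smul_psd (by positivity) Matrix.PosSemidef.one).add hM
  set S := CFC.sqrt K with hSdef
  have hSps : S.PosSemidef := nonneg_iff_posSemidef.mp (CFC.sqrt_nonneg K)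
  have hSS : S * S = K := by
    have := CFC.sqrt_mul_sqrt_self K (nonneg_iff_posSemidef.mpr hK)
    exact this
  have hcomm : S * M = M * S := by
    have hMK : M = S * S - (n:ℝ) • 1 := by rw [hSS, hKdef]; abel
    rw [hMK]
    simp only [Matrix.mul_sub, Matrix.sub_mul, Matrix.mul_smul, Matrix.smul_mul,
      Matrix.mul_one, Matrix.one_mul, Matrix.mul_assoc]
  have hNS : S * (((n:ℝ)) • 1 - M) = (((n:ℝ)) • 1 - M) * S := by
    simp only [Matrix.mul_sub, Matrix.sub_mul, Matrix.mul_smul, Matrix.smul_mul,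
      Matrix.mul_one, Matrix.one_mul, hcomm]
  have hMM : (((n:ℝ)^2) • (1 : Matrix (Fin n) (Fin n) ℝ) - M * M).PosSemidef := by
    have h := hN.conjTranspose_mul_mul_same S
    rw [hSps.isHermitian.eq] at h
    have he : S * (((n:ℝ)) • 1 - M) * S = ((n:ℝ)^2) • 1 - M * M := by
      rw [hNS, Matrix.mul_assoc, hSS, hKdef]
      simp only [Matrix.sub_mul, Matrix.mul_add, Matrix.smul_mul, Matrix.mul_smul,
        Matrix.one_mul, Matrix.mul_one, pow_two]
      module
    rw [he] at h
    exact h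
  have hxn : ∀ v : Fin n → ℝ, (M *ᵥ v) ⬝ᵥ (M *ᵥ v) ≤ (n:ℝ)^2 * (v ⬝ᵥ v) := by
    intro v
    have h0 := hMM.dotProduct_mulVec_nonneg v
    simp only [star_trivial, sub_mulVec, smul_mulVec, one_mulVec, dotProduct_sub,
      dotProduct_smul, smul_eq_mul] at h0
    have h1 : v ⬝ᵥ (M * M) *ᵥ v = (M *ᵥ v) ⬝ᵥ (M *ᵥ v) := by
      rw [← mulVec_mulVec, dotProduct_mulVec v M, ← mulVec_transpose, hMt]
    rw [h1] at h0
    linarith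
  apply ContinuousLinearMap.opNorm_le_bound _ (Nat.cast_nonneg n)
  intro x
  have happ : toEuclideanCLM (𝕜 := ℝ) M x
      = (WithLp.equiv 2 ((Fin n) → ℝ)).symm (M *ᵥ (WithLp.equiv 2 _ x)) := rfl
  rw [happ, EuclideanSpace.norm_eq, EuclideanSpace.norm_eq]
  simp only [WithLp.equiv_symm_apply, PiLp.toLp_apply, WithLp.equiv_apply, Real.norm_eq_abs, sq_abs]
  have hle := hxn (fun j => x j)
  simp only [dotProduct] at hle
  have hrhs : (n:ℝ) * Real.sqrt (∑ i, x i ^ 2) = Real.sqrt ((n:ℝ)^2 * ∑ i, x i ^ 2) := by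
    rw [Real.sqrt_mul (sq_nonneg _), Real.sqrt_sq (Nat.cast_nonneg n)]
  rw [hrhs]
  apply Real.sqrt_le_sqrt
  calc ∑ i, (M *ᵥ (WithLp.equiv 2 ((Fin n) → ℝ) x)) i ^ 2
      = ∑ i, (M *ᵥ (fun j => x j)) i * (M *ᵥ (fun j => x j)) i := by
        apply Finset.sum_congr rfl; intro i _; rw [sq]; rfl
    _ ≤ (n:ℝ)^2 * ∑ i, x i * x i := hle
    _ = (n:ℝ)^2 * ∑ i, x i ^ 2 := by
        congr 1; apply Finset.sum_congr rfl; intro i _; rw [sq]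


/-- Frobenius norm of a matrix. -/

theorem stmt6 (n : ℕ) (α : Matrix (Fin n) (Fin n) ℝ → ℝ)
    (hα_add : ∀ S T, α (S + T) ≤ α S + α T)
    (hα_smul : ∀ (c : ℝ) T, α (c • T) = |c| * α T)
    (hα_pos : ∀ T, α T = 0 → T = 0)
    (hαF : ∀ T, α T ≤ frob T)
    (Aopt : Matrix (Fin n) (Fin n) ℝ)
    (hApd : Aopt.PosDef) (hAfeas : α Aopt ≤ 1)
    (hAopt : ∀ B : Matrix (Fin n) (Fin n) ℝ, B.PosSemidef → α B ≤ 1 → B.det ≤ Aopt.det) :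
    ‖Matrix.toEuclideanCLM (𝕜 := ℝ) Aopt⁻¹‖ ≤ n := by
  have hMps : Aopt⁻¹.PosSemidef := (hApd.inv).posSemidef
  exact norm_bound hMps (fun x hx => key_bound n α hα_add hα_smul hαF Aopt hApd hAfeas hAopt x hx)
end

section
/- Let B ≻ 0 be an n×n positive definite matrix with tr(B) ≤ n and det(B) ≥ 1 - nε for some ε with 0 ≤ nε < 1. Then the smallest eigenvalue of B is at least 1 - 3√(nε); equivalently B ⪰ (1 - 3√(nε)) I_n. -/
open Matrix

lemma scalar_key {x : ℝ} (h0 : 0 ≤ x) (h1 : x ≤ 1) :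
    (1 - x) * Real.exp x ≤ 1 - x ^ 2 / 6 := by
  have hb := Real.exp_bound (x := -x) (by rw [abs_neg, abs_of_nonneg h0]; exact h1)
      (n := 4) (by norm_num)
  have hsum4 : ∑ m ∈ Finset.range 4, (-x) ^ m / (m.factorial : ℝ)
      = 1 - x + x ^ 2 / 2 - x ^ 3 / 6 := by
    simp [Finset.sum_range_succ, Nat.factorial]
    ring
  have hlow : 1 - x + x ^ 2 / 2 - x ^ 3 / 6 - 5 * x ^ 4 / 96 ≤ Real.exp (-x) := by
    have h2 := (abs_sub_le_iff.1 hb).2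
    rw [abs_neg, abs_of_nonneg h0, hsum4] at h2
    norm_num [Nat.factorial] at h2
    linarith
  have hpos : (0:ℝ) < Real.exp (-x) := Real.exp_pos _
  have key : 1 - x ≤ (1 - x ^ 2 / 6) * Real.exp (-x) := by
    have hc : (0:ℝ) ≤ 1 - x ^ 2 / 6 := by nlinarith
    have : 1 - x ≤ (1 - x ^ 2 / 6) * (1 - x + x ^ 2 / 2 - x ^ 3 / 6 - 5 * x ^ 4 / 96) := by
      nlinarith [sq_nonneg x, (pow_le_one₀ h0 h1 : x ^ 2 ≤ 1), sq_nonneg (x^2),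
        (pow_le_one₀ h0 h1 : x ^ 4 ≤ 1), (pow_le_one₀ h0 h1 : x ^ 3 ≤ 1)]
    exact this.trans (by nlinarith [hlow])
  have := mul_le_mul_of_nonneg_right key (Real.exp_pos x).le
  rwa [mul_assoc, ← Real.exp_add, neg_add_cancel, Real.exp_zero, mul_one] at this

lemma eig_key {n : ℕ} (lam : Fin n → ℝ) (t : ℝ) (hpos : ∀ i, 0 < lam i)
    (hsum : ∑ i, lam i ≤ n) (hprod : 1 - t ≤ ∏ i, lam i) (ht0 : 0 ≤ t) (i : Fin n) :
    1 - 3 * Real.sqrt t ≤ lam i := by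
  by_contra h
  push_neg at h
  set x := 1 - lam i with hx
  clear_value x
  have hst : 0 ≤ Real.sqrt t := Real.sqrt_nonneg t
  have hx3 : 3 * Real.sqrt t < x := by linarith
  have hx0 : 0 < x := by linarith
  have hx1 : x < 1 := by linarith [hpos i]
  have hn1 : 1 ≤ n := Nat.one_le_iff_ne_zero.2 (by rintro rfl; exact i.elim0)
  -- product over erase
  have hprodsplit : ∏ k, lam k = lam i * ∏ k ∈ Finset.univ.erase i, lam k :=
    (Finset.mul_prod_erase Finset.univ lam (Finset.mem_univ i)).symm
  have hperase : ∏ k ∈ Finset.univ.erase i, lam k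
      ≤ Real.exp (∑ k ∈ Finset.univ.erase i, (lam k - 1)) := by
    rw [Real.exp_sum]
    exact Finset.prod_le_prod (fun k _ => (hpos k).le)
      (fun k _ => by linarith [Real.add_one_le_exp (lam k - 1)])
  have hsum' : ∑ k ∈ Finset.univ.erase i, (lam k - 1) ≤ x := by
    have hcard : (Finset.univ.erase i).card = n - 1 := by
      rw [Finset.card_erase_of_mem (Finset.mem_univ i)]; simp
    have hse : ∑ k ∈ Finset.univ.erase i, lam k = (∑ k, lam k) - lam i := by
      rw [Finset.sum_erase_eq_sub (Finset.mem_univ i)]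
    rw [Finset.sum_sub_distrib, hse, Finset.sum_const, hcard, nsmul_eq_mul, mul_one,
      Nat.cast_sub hn1, Nat.cast_one]
    linarith
  have hbound : ∏ k, lam k ≤ (1 - x) * Real.exp x := by
    rw [hprodsplit]
    have h1 : lam i * ∏ k ∈ Finset.univ.erase i, lam k
        ≤ lam i * Real.exp (∑ k ∈ Finset.univ.erase i, (lam k - 1)) :=
      mul_le_mul_of_nonneg_left hperase (hpos i).le
    have h2 : lam i * Real.exp (∑ k ∈ Finset.univ.erase i, (lam k - 1))
        ≤ lam i * Real.exp x :=
      mul_le_mul_of_nonneg_left (Real.exp_le_exp.2 hsum') (hpos i).le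
    have : lam i = 1 - x := by rw [hx]; ring
    rw [this] at h1 h2 ⊢
    linarith
  have hsk := scalar_key hx0.le hx1.le
  have hsq : Real.sqrt t ^ 2 = t := Real.sq_sqrt ht0
  have hx2 : 9 * t < x ^ 2 := by
    have := mul_self_lt_mul_self (by positivity : (0:ℝ) ≤ 3 * Real.sqrt t) hx3
    nlinarith [hsq]
  have hfin : 1 - t ≤ 1 - x ^ 2 / 6 := hprod.trans (hbound.trans hsk)
  linarith

theorem stmt7 (n : ℕ) (B : Matrix (Fin n) (Fin n) ℝ) (ε : ℝ)
    (hB : B.PosDef) (htr : B.trace ≤ n) (hdet : 1 - n * ε ≤ B.det)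
    (hε0 : 0 ≤ n * ε) (hε1 : n * ε < 1) :
    (B - (1 - 3 * Real.sqrt (n * ε)) • (1 : Matrix (Fin n) (Fin n) ℝ)).PosSemidef := by
  have hH := hB.1
  set lam := hH.eigenvalues with hlam
  set U := hH.eigenvectorUnitary with hU
  set c := 1 - 3 * Real.sqrt (n * ε) with hc
  have hspec := hH.spectral_theorem
  rw [Unitary.conjStarAlgAut_apply, ← hlam] at hspec
  have hdetprod : B.det = ∏ i, lam i := by
    simpa using hH.det_eq_prod_eigenvalues
  have htrsum : B.trace = ∑ i, lam i := by
    conv_lhs => rw [hspec]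
    rw [Matrix.trace_mul_cycle]
    rw [(Matrix.mem_unitaryGroup_iff').mp U.2]
    simp [Matrix.trace_diagonal]
  have hposl : ∀ i, 0 < lam i := hB.eigenvalues_pos
  have hkey : ∀ i, c ≤ lam i := by
    intro i
    exact eig_key lam (n * ε) hposl (htrsum ▸ htr) (by rw [← hdetprod]; exact hdet) hε0 i
  have hdecomp : B - c • (1 : Matrix (Fin n) (Fin n) ℝ)
      = (U : Matrix (Fin n) (Fin n) ℝ) * diagonal (fun i => lam i - c)
        * (star U : Matrix (Fin n) (Fin n) ℝ) := by
    have h1 : c • (1 : Matrix (Fin n) (Fin n) ℝ)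
        = (U : Matrix (Fin n) (Fin n) ℝ) * (c • 1) * (star U : Matrix (Fin n) (Fin n) ℝ) := by
      rw [Matrix.mul_smul, mul_one, Matrix.smul_mul, (Matrix.mem_unitaryGroup_iff).mp U.2]
    have hmid : diagonal (RCLike.ofReal ∘ lam) - c • (1 : Matrix (Fin n) (Fin n) ℝ)
        = diagonal (fun i => lam i - c) := by
      ext j k
      rcases eq_or_ne j k with rfl | hjk
      · simp [Matrix.one_apply_eq]
      · simp [Matrix.diagonal_apply_ne _ hjk, Matrix.one_apply_ne hjk]
    conv_lhs => rw [hspec, h1]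
    rw [← Matrix.sub_mul, ← Matrix.mul_sub, hmid]
  rw [hdecomp]
  have hdiag : (diagonal (fun i => lam i - c)).PosSemidef :=
    Matrix.posSemidef_diagonal_iff.2 (fun i => by linarith [hkey i])
  exact hdiag.mul_mul_conjTranspose_same _
end

section
/- If A ≻ 0 is a (1-ε)-approximate optimizer (in det^{1/n}) of the program max{det(A) : A ⪰ 0, α(A) ≤ 1} with optimum A_OPT, where α(T) ≤ ‖T‖_F, and nε < 1, then A^{-1} ⪯ (1 + 6√(nε)) A_OPT^{-1} provided ε ≤ 1/(36n). -/
open Matrix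

set_option maxHeartbeats 4000000

/-- Positive scalar multiples of PSD matrices are PSD. -/
lemma aux_psd_smul {n : ℕ} {A : Matrix (Fin n) (Fin n) ℝ} (hA : A.PosSemidef)
    {c : ℝ} (hc : 0 ≤ c) : (c • A).PosSemidef := by
  constructor
  · unfold Matrix.IsHermitian
    rw [conjTranspose_smul, hA.1.eq]
    simp
  · intro x
    have h := hA.2 x
    exact (hA.smul hc).2 x

/-- Key scalar inequality. -/
lemma aux_scalar {μ t : ℝ} (hμ : 0 < μ) (ht0 : 0 ≤ t) (ht : t ≤ 1 / 36)
    (h : (1 - t) * (1 + μ) ^ 2 ≤ 4 * μ) : 1 ≤ (1 + 6 * Real.sqrt t) * μ := by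
  set u := Real.sqrt t with hu
  have hu0 : 0 ≤ u := Real.sqrt_nonneg t
  have hut : u * u = t := Real.mul_self_sqrt ht0
  have hu6 : u ≤ 1 / 6 := by
    have : Real.sqrt t ≤ Real.sqrt (1 / 36) := Real.sqrt_le_sqrt ht
    rwa [show Real.sqrt (1/36 : ℝ) = 1/6 by
      rw [show (1/36 : ℝ) = (1/6)^2 by norm_num, Real.sqrt_sq (by norm_num)]] at this
  have h1 : (1 - μ) ^ 2 ≤ (u * (1 + μ)) ^ 2 := by nlinarith
  have h2 : 1 - μ ≤ u * (1 + μ) := by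
    calc 1 - μ ≤ |1 - μ| := le_abs_self _
    _ = Real.sqrt ((1 - μ) ^ 2) := (Real.sqrt_sq_eq_abs _).symm
    _ ≤ Real.sqrt ((u * (1 + μ)) ^ 2) := Real.sqrt_le_sqrt h1
    _ = |u * (1 + μ)| := Real.sqrt_sq_eq_abs _
    _ = u * (1 + μ) := abs_of_nonneg (by nlinarith)
  nlinarith

theorem stmt10 (n : ℕ) (hn : 0 < n) (α : Matrix (Fin n) (Fin n) ℝ → ℝ)
    (hα_add : ∀ S T, α (S + T) ≤ α S + α T)
    (hα_smul : ∀ (c : ℝ) T, α (c • T) = |c| * α T)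
    (hα_pos : ∀ T, α T = 0 → T = 0)
    (hαF : ∀ T, α T ≤ frob T)
    (Aopt : Matrix (Fin n) (Fin n) ℝ) (hAoptpd : Aopt.PosDef) (hAoptfeas : α Aopt ≤ 1)
    (hAoptmax : ∀ B : Matrix (Fin n) (Fin n) ℝ, B.PosSemidef → α B ≤ 1 →
      B.det ≤ Aopt.det)
    (A : Matrix (Fin n) (Fin n) ℝ) (hApd : A.PosDef) (hAfeas : α A ≤ 1)
    (ε : ℝ) (hε0 : 0 ≤ ε) (hε1 : n * ε < 1) (hε : ε ≤ 1 / (36 * n))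
    (hAapprox : (1 - ε) * Aopt.det ^ ((1 : ℝ) / n) ≤ A.det ^ ((1 : ℝ) / n)) :
    ((1 + 6 * Real.sqrt (n * ε)) • Aopt⁻¹ - A⁻¹).PosSemidef := by
  classical
  have hn' : (n : ℝ) ≠ 0 := Nat.cast_ne_zero.mpr hn.ne'
  have hn1 : (1 : ℝ) ≤ (n : ℝ) := by exact_mod_cast hn
  set t : ℝ := (n : ℝ) * ε with htdef
  have ht0 : 0 ≤ t := mul_nonneg (by positivity) hε0
  have ht36 : t ≤ 1 / 36 := by
    rw [htdef]
    rcases eq_or_lt_of_le hε0 with h | h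
    · rw [← h]; simp
    · calc (n : ℝ) * ε ≤ (n : ℝ) * (1 / (36 * n)) := by
            exact mul_le_mul_of_nonneg_left hε (by positivity)
      _ = 1 / 36 := by field_simp
  have hε1' : ε < 1 := lt_of_le_of_lt (le_mul_of_one_le_left hε0 hn1) hε1
  have h1ε : 0 ≤ 1 - ε := by linarith
  set δ : ℝ := 6 * Real.sqrt t with hδdef
  have hδ0 : 0 ≤ δ := by positivity
  -- square root of Aopt
  have hdetAopt : 0 < Aopt.det := hAoptpd.det_pos
  have hdetA : 0 < A.det := hApd.det_pos
  set S : Matrix (Fin n) (Fin n) ℝ := (open scoped MatrixOrder in CFC.sqrt Aopt) with hSdef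
  have hSH : S.IsHermitian := (open scoped MatrixOrder in (CFC.sqrt_nonneg Aopt).posSemidef.1)
  have hSS : S * S = Aopt := (open scoped MatrixOrder in CFC.sqrt_mul_sqrt_self Aopt hAoptpd.posSemidef.nonneg)
  have hdetS : S.det ≠ 0 := by
    intro h
    rw [← hSS, det_mul, h, zero_mul] at hdetAopt
    exact lt_irrefl _ hdetAopt
  have hSunit : IsUnit S.det := isUnit_iff_ne_zero.mpr hdetS
  set R : Matrix (Fin n) (Fin n) ℝ := S⁻¹ with hRdef
  have hRH : R.IsHermitian := hSH.inv
  have hRS : R * S = 1 := nonsing_inv_mul S hSunit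
  have hSR : S * R = 1 := mul_nonsing_inv S hSunit
  have hdetRS : R.det * S.det = 1 := by rw [← det_mul, hRS, det_one]
  set M : Matrix (Fin n) (Fin n) ℝ := R * A * R with hMdef
  have hMpsd : M.PosSemidef := by
    have h := hApd.posSemidef.conjTranspose_mul_mul_same R
    rwa [hRH.eq] at h
  have hMH : M.IsHermitian := hMpsd.1
  have hA_eq : A = S * M * S := by
    rw [hMdef]
    calc A = (S * R) * A * (R * S) := by rw [hSR, hRS, one_mul, mul_one]
    _ = S * (R * A * R) * S := by noncomm_ring
  have hAoptinv : Aopt⁻¹ = R * R := by rw [← hSS, Matrix.mul_inv_rev]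
  -- determinant identities
  have hdetM : M.det * Aopt.det = A.det := by
    have h1 : M.det = R.det * A.det * R.det := by rw [hMdef, det_mul, det_mul]
    have h2 : Aopt.det = S.det * S.det := by rw [← hSS, det_mul]
    rw [h1, h2]
    linear_combination (A.det * (R.det * S.det + 1)) * hdetRS
  have hdetMpos : 0 < M.det := by
    rcases le_or_gt M.det 0 with h | h
    · exfalso
      nlinarith [mul_nonpos_of_nonpos_of_nonneg h hdetAopt.le]
    · exact h
  -- lower bound on det M
  have hpowAopt : (Aopt.det ^ ((1:ℝ)/n)) ^ n = Aopt.det := by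
    rw [← Real.rpow_natCast (Aopt.det ^ ((1:ℝ)/n)) n, ← Real.rpow_mul hdetAopt.le,
      one_div, inv_mul_cancel₀ hn', Real.rpow_one]
  have hpowA : (A.det ^ ((1:ℝ)/n)) ^ n = A.det := by
    rw [← Real.rpow_natCast (A.det ^ ((1:ℝ)/n)) n, ← Real.rpow_mul hdetA.le,
      one_div, inv_mul_cancel₀ hn', Real.rpow_one]
  have hkeydet : (1 - ε) ^ n * Aopt.det ≤ A.det := by
    have hb : 0 ≤ (1 - ε) * Aopt.det ^ ((1:ℝ)/n) :=
      mul_nonneg h1ε (Real.rpow_nonneg hdetAopt.le _)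
    have h := pow_le_pow_left₀ hb hAapprox n
    rwa [mul_pow, hpowAopt, hpowA] at h
  have hBern : 1 - t ≤ (1 - ε) ^ n := by
    have h := one_add_mul_le_pow (a := -ε) (by linarith) n
    rw [htdef]
    calc 1 - (n : ℝ) * ε = 1 + (n : ℝ) * (-ε) := by ring
    _ ≤ (1 + -ε) ^ n := h
    _ = (1 - ε) ^ n := by ring_nf
  have hdetMlow : 1 - t ≤ M.det := by
    have h : (1 - t) * Aopt.det ≤ M.det * Aopt.det := by
      rw [hdetM]
      calc (1 - t) * Aopt.det ≤ (1 - ε) ^ n * Aopt.det :=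
            mul_le_mul_of_nonneg_right hBern hdetAopt.le
      _ ≤ A.det := hkeydet
    exact le_of_mul_le_mul_right h hdetAopt
  -- feasibility of the midpoint gives det (M + 1) ≤ 2 ^ n
  have hmid : ((2:ℝ)⁻¹ • (A + Aopt)).det ≤ Aopt.det := by
    apply hAoptmax
    · exact aux_psd_smul (hApd.posSemidef.add hAoptpd.posSemidef) (by norm_num)
    · rw [hα_smul]
      have := hα_add A Aopt
      rw [abs_of_nonneg (by norm_num : (0:ℝ) ≤ (2:ℝ)⁻¹)]
      nlinarith [hα_add A Aopt]
  have hsumdet : (A + Aopt).det = Aopt.det * (M + 1).det := by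
    have h : A + Aopt = S * (M + 1) * S := by
      rw [hA_eq, ← hSS]
      noncomm_ring
    rw [h, det_mul, det_mul, show Aopt.det = S.det * S.det by rw [← hSS, det_mul]]
    ring
  have hdetM1 : (M + 1).det ≤ 2 ^ n := by
    have h1 : ((2:ℝ)⁻¹ • (A + Aopt)).det = (2:ℝ)⁻¹ ^ n * (A + Aopt).det := by
      rw [det_smul, Fintype.card_fin]
    rw [h1, hsumdet] at hmid
    have h2n : (0:ℝ) < (2:ℝ)⁻¹ ^ n := by positivity
    have := (mul_le_mul_iff_right₀ (by positivity : (0:ℝ) < Aopt.det⁻¹)).mpr hmid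
    have h3 : (2:ℝ)⁻¹ ^ n * (M + 1).det ≤ 1 := by
      calc (2:ℝ)⁻¹ ^ n * (M + 1).det
          = Aopt.det⁻¹ * ((2:ℝ)⁻¹ ^ n * (Aopt.det * (M + 1).det)) := by
            field_simp
      _ ≤ Aopt.det⁻¹ * Aopt.det := this
      _ = 1 := inv_mul_cancel₀ hdetAopt.ne'
    calc (M + 1).det = ((2:ℝ)⁻¹ ^ n)⁻¹ * ((2:ℝ)⁻¹ ^ n * (M + 1).det) := by
          field_simp
    _ ≤ ((2:ℝ)⁻¹ ^ n)⁻¹ * 1 := mul_le_mul_of_nonneg_left h3 (by positivity)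
    _ = 2 ^ n := by simp
  -- eigenvalues of M
  set μ : Fin n → ℝ := hMH.eigenvalues with hμdef
  have hprodμ : ∏ i, μ i = M.det := by
    have h := hMH.det_eq_prod_eigenvalues
    simpa using h.symm
  have hμnonneg : ∀ i, 0 ≤ μ i := fun i => hMpsd.eigenvalues_nonneg i
  have hμpos : ∀ i, 0 < μ i := by
    intro i
    rcases lt_or_eq_of_le (hμnonneg i) with h | h
    · exact h
    · exfalso
      have : ∏ j, μ j = 0 := Finset.prod_eq_zero (Finset.mem_univ i) h.symm
      rw [hprodμ] at this
      exact hdetMpos.ne' this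
  set V : Matrix (Fin n) (Fin n) ℝ := (hMH.eigenvectorUnitary : Matrix (Fin n) (Fin n) ℝ)
    with hVdef
  have hV1 : V * star V = 1 := mem_unitaryGroup_iff.mp hMH.eigenvectorUnitary.2
  have hV2 : star V * V = 1 := mem_unitaryGroup_iff'.mp hMH.eigenvectorUnitary.2
  have hspec : M = V * diagonal μ * star V := by
    have h := hMH.spectral_theorem
    simpa using h
  clear_value μ V M R S δ t
  -- product of (1 + μ i)
  have hM1 : M + 1 = V * diagonal (fun i => μ i + 1) * star V := by
    have h1 : (1 : Matrix (Fin n) (Fin n) ℝ) = V * 1 * star V := by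
      rw [mul_one, hV1]
    calc M + 1 = V * diagonal μ * star V + V * 1 * star V := by rw [← hspec, ← h1]
    _ = V * (diagonal μ + 1) * star V := by noncomm_ring
    _ = V * diagonal (fun i => μ i + 1) * star V := by
        rw [show (1 : Matrix (Fin n) (Fin n) ℝ) = diagonal (fun _ => 1) by
          rw [diagonal_one], diagonal_add]
  have hprodμ1 : ∏ i, (1 + μ i) ≤ 2 ^ n := by
    have h : (M + 1).det = ∏ i, (μ i + 1) := by
      rw [hM1, det_mul, det_mul, det_diagonal]
      have hdv : V.det * (star V).det = 1 := by rw [← det_mul, hV1, det_one]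
      linear_combination (∏ i, (μ i + 1)) * hdv
    calc ∏ i, (1 + μ i) = ∏ i, (μ i + 1) := by
          apply Finset.prod_congr rfl; intros; ring
    _ = (M + 1).det := h.symm
    _ ≤ 2 ^ n := hdetM1
  -- key eigenvalue bound
  have hkey : ∀ k, 1 ≤ (1 + δ) * μ k := by
    intro k
    set P : ℝ := ∏ i ∈ Finset.univ.erase k, μ i with hPdef
    set Q : ℝ := ∏ i ∈ Finset.univ.erase k, (1 + μ i) with hQdef
    have hPpos : 0 < P := by
      rw [hPdef]
      exact Finset.prod_pos fun i _ => hμpos i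
    have hQpos : 0 < Q := by
      rw [hQdef]
      exact Finset.prod_pos fun i _ => by linarith [hμpos i]
    have hcard : (Finset.univ.erase k).card = n - 1 := by
      rw [Finset.card_erase_of_mem (Finset.mem_univ k), Finset.card_univ, Fintype.card_fin]
    have hμP : μ k * P = ∏ i, μ i :=
      Finset.mul_prod_erase Finset.univ (fun i => μ i) (Finset.mem_univ k)
    have hμQ : (1 + μ k) * Q = ∏ i, (1 + μ i) :=
      Finset.mul_prod_erase Finset.univ (fun i => 1 + μ i) (Finset.mem_univ k)
    have hPQ : 4 ^ (n - 1) * P ≤ Q ^ 2 := by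
      have h : ∏ i ∈ Finset.univ.erase k, (4 * μ i) ≤
          ∏ i ∈ Finset.univ.erase k, (1 + μ i) ^ 2 :=
        Finset.prod_le_prod (fun i _ => by nlinarith [hμpos i])
          (fun i _ => by nlinarith [sq_nonneg (1 - μ i)])
      have h1 : ∏ i ∈ Finset.univ.erase k, (4 * μ i) = 4 ^ (n - 1) * P := by
        rw [Finset.prod_mul_distrib, Finset.prod_const, hcard, hPdef]
      have h2 : ∏ i ∈ Finset.univ.erase k, (1 + μ i) ^ 2 = Q ^ 2 := by
        rw [Finset.prod_pow, hQdef]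
      rw [h1, h2] at h
      exact h
    -- combine
    have h4pos : (0:ℝ) < 4 ^ (n - 1) := by positivity
    have hstep1 : 1 - t ≤ μ k * P := by rw [hμP, hprodμ]; exact hdetMlow
    have hstep2 : (1 + μ k) * Q ≤ 2 ^ n := by rw [hμQ]; exact hprodμ1
    have hμk := hμpos k
    have hscalar : (1 - t) * (1 + μ k) ^ 2 ≤ 4 * μ k := by
      have hc1 : (1 - t) * (1 + μ k) ^ 2 * 4 ^ (n - 1) ≤
          μ k * P * (1 + μ k) ^ 2 * 4 ^ (n - 1) := by
        have := mul_le_mul_of_nonneg_right hstep1 (by positivity : (0:ℝ) ≤ (1 + μ k) ^ 2)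
        nlinarith [this, h4pos]
      have hc2 : μ k * P * (1 + μ k) ^ 2 * 4 ^ (n - 1) ≤ μ k * (Q ^ 2 * (1 + μ k) ^ 2) := by
        have h := mul_le_mul_of_nonneg_left hPQ hμk.le
        have h' := mul_le_mul_of_nonneg_right h (by positivity : (0:ℝ) ≤ (1 + μ k) ^ 2)
        nlinarith [h']
      have hc3 : μ k * (Q ^ 2 * (1 + μ k) ^ 2) ≤ μ k * (2 ^ n) ^ 2 := by
        apply mul_le_mul_of_nonneg_left _ hμk.le
        have hlhs : Q ^ 2 * (1 + μ k) ^ 2 = ((1 + μ k) * Q) ^ 2 := by ring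
        rw [hlhs]
        apply pow_le_pow_left₀ (by positivity) hstep2
      have hc4 : μ k * ((2:ℝ) ^ n) ^ 2 = 4 * μ k * 4 ^ (n - 1) := by
        have : ((2:ℝ) ^ n) ^ 2 = 4 ^ n := by
          rw [← pow_mul, show (4:ℝ) = 2 ^ 2 by norm_num, ← pow_mul]
          ring_nf
        rw [this, show (4:ℝ) ^ n = 4 * 4 ^ (n - 1) by
          rw [← pow_succ']; congr 1; omega]
        ring
      have := le_trans (le_trans hc1 hc2) hc3
      rw [hc4] at this
      exact le_of_mul_le_mul_right this h4pos
    rw [hδdef]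
    exact aux_scalar hμk ht0 ht36 hscalar
  -- inverse of M
  have hdiaginv : diagonal μ * diagonal (fun i => (μ i)⁻¹) = 1 := by
    rw [diagonal_mul_diagonal]
    have h : (fun i => μ i * (μ i)⁻¹) = fun _ : Fin n => (1 : ℝ) :=
      funext fun i => mul_inv_cancel₀ (hμpos i).ne'
    rw [h, diagonal_one]
  have hMinv : M⁻¹ = V * diagonal (fun i => (μ i)⁻¹) * star V := by
    apply inv_eq_right_inv
    calc M * (V * diagonal (fun i => (μ i)⁻¹) * star V)
        = V * diagonal μ * (star V * V) * diagonal (fun i => (μ i)⁻¹) * star V := by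
          rw [hspec]; noncomm_ring
    _ = V * (diagonal μ * diagonal (fun i => (μ i)⁻¹)) * star V := by
          rw [hV2]; noncomm_ring
    _ = 1 := by rw [hdiaginv, mul_one, hV1]
  -- N := (1+δ) • 1 - M⁻¹ is PSD
  have hNdiag : (1 + δ) • (1 : Matrix (Fin n) (Fin n) ℝ) - M⁻¹ =
      V * diagonal (fun i => (1 + δ) - (μ i)⁻¹) * star V := by
    have h1 : (1 + δ) • (1 : Matrix (Fin n) (Fin n) ℝ) =
        V * ((1 + δ) • (1 : Matrix (Fin n) (Fin n) ℝ)) * star V := by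
      rw [mul_smul_comm, smul_mul_assoc, mul_one, hV1]
    have h2 : (1 + δ) • (1 : Matrix (Fin n) (Fin n) ℝ) - diagonal (fun i => (μ i)⁻¹) =
        diagonal (fun i => (1 + δ) - (μ i)⁻¹) := by
      ext i j
      by_cases h : i = j <;>
        simp [Matrix.sub_apply, Matrix.smul_apply, Matrix.one_apply, Matrix.diagonal_apply, h]
    calc (1 + δ) • (1 : Matrix (Fin n) (Fin n) ℝ) - M⁻¹
        = V * ((1 + δ) • (1 : Matrix (Fin n) (Fin n) ℝ)) * star V -
          V * diagonal (fun i => (μ i)⁻¹) * star V := by rw [← h1, hMinv]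
    _ = V * ((1 + δ) • (1 : Matrix (Fin n) (Fin n) ℝ) - diagonal (fun i => (μ i)⁻¹)) *
          star V := by noncomm_ring
    _ = V * diagonal (fun i => (1 + δ) - (μ i)⁻¹) * star V := by rw [h2]
  have hNpsd : ((1 + δ) • (1 : Matrix (Fin n) (Fin n) ℝ) - M⁻¹).PosSemidef := by
    rw [hNdiag]
    have hd : (diagonal (fun i => (1 + δ) - (μ i)⁻¹)).PosSemidef := by
      apply posSemidef_diagonal_iff.mpr
      intro i
      have h := hkey i
      have hμi := hμpos i
      have : (μ i)⁻¹ ≤ 1 + δ := by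
        rw [inv_le_iff_one_le_mul₀ hμi]
        linarith [hkey i]
      linarith
    have h := hd.mul_mul_conjTranspose_same V
    rwa [← star_eq_conjTranspose] at h
  -- conclude
  have hAinv : A⁻¹ = R * M⁻¹ * R := by
    rw [hA_eq, Matrix.mul_inv_rev, Matrix.mul_inv_rev]
    rw [hRdef]
    noncomm_ring
  have hfinal : (1 + δ) • Aopt⁻¹ - A⁻¹ =
      R * ((1 + δ) • (1 : Matrix (Fin n) (Fin n) ℝ) - M⁻¹) * R := by
    have h1 : R * ((1 + δ) • (1 : Matrix (Fin n) (Fin n) ℝ)) * R = (1 + δ) • Aopt⁻¹ := by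
      rw [hAoptinv, mul_smul_comm, smul_mul_assoc, mul_one]
    calc (1 + δ) • Aopt⁻¹ - A⁻¹
        = R * ((1 + δ) • (1 : Matrix (Fin n) (Fin n) ℝ)) * R - R * M⁻¹ * R := by
          rw [h1, hAinv]
    _ = R * ((1 + δ) • (1 : Matrix (Fin n) (Fin n) ℝ) - M⁻¹) * R := by noncomm_ring
  rw [hfinal]
  have h := hNpsd.conjTranspose_mul_mul_same R
  rwa [hRH.eq] at h
end

section
/- For any norm α on R^{n×n}, there exists an invertible A ∈ R^{n×n} with α(A) = 1 and α*(A^{-1}) = n, where α*(S) = sup{tr(SA) : α(A) ≤ 1} (Lewis's theorem). -/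
open Matrix

/-- Dual norm `α*(S) = sup {tr(SA) : α(A) ≤ 1}`. -/
noncomputable def dualNorm {n : ℕ} (α : Matrix (Fin n) (Fin n) ℝ → ℝ)
    (S : Matrix (Fin n) (Fin n) ℝ) : ℝ :=
  sSup {t | ∃ B : Matrix (Fin n) (Fin n) ℝ, α B ≤ 1 ∧ (S * B).trace = t}

attribute [local instance] Matrix.normedAddCommGroup Matrix.normedSpace

open Filter Topology Set

/-- Lewis's theorem. -/
theorem stmt11 (n : ℕ) (hn : 0 < n) (α : Matrix (Fin n) (Fin n) ℝ → ℝ)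
    (hα_add : ∀ S T, α (S + T) ≤ α S + α T)
    (hα_smul : ∀ (c : ℝ) T, α (c • T) = |c| * α T)
    (hα_pos : ∀ T, α T = 0 → T = 0) :
    ∃ A : Matrix (Fin n) (Fin n) ℝ,
      IsUnit A.det ∧ α A = 1 ∧ dualNorm α A⁻¹ = n := by
  classical
  haveI : Nonempty (Fin n) := ⟨⟨0, hn⟩⟩
  -- basic facts about α
  have α0 : α 0 = 0 := by simpa using hα_smul 0 0
  have αnonneg : ∀ T, 0 ≤ α T := by
    intro T
    have hneg : α (-T) = α T := by simpa using hα_smul (-1) T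
    have h := hα_add T (-T)
    rw [add_neg_cancel, α0, hneg] at h
    linarith
  have αpos : ∀ T : Matrix (Fin n) (Fin n) ℝ, T ≠ 0 → 0 < α T := by
    intro T hT
    rcases lt_or_eq_of_le (αnonneg T) with h | h
    · exact h
    · exact absurd (hα_pos T h.symm) hT
  -- α is Lipschitz hence continuous
  have αsum : ∀ (s : Finset (Fin n × Fin n)) (f : Fin n × Fin n → Matrix (Fin n) (Fin n) ℝ),
      α (∑ p ∈ s, f p) ≤ ∑ p ∈ s, α (f p) := by
    intro s f
    induction s using Finset.induction with
    | empty => simp [α0]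
    | insert _ _ h ih =>
      rw [Finset.sum_insert h, Finset.sum_insert h]
      exact le_trans (hα_add _ _) (by linarith)
  set K : ℝ := ∑ p : Fin n × Fin n, α (Matrix.single p.1 p.2 (1:ℝ)) with hK
  have hKnonneg : 0 ≤ K := Finset.sum_nonneg fun p _ => αnonneg _
  have αle : ∀ B : Matrix (Fin n) (Fin n) ℝ, α B ≤ K * ‖B‖ := by
    intro B
    have hx : B = ∑ p : Fin n × Fin n, (B p.1 p.2) • Matrix.single p.1 p.2 (1:ℝ) := by
      rw [Fintype.sum_prod_type]
      simp_rw [smul_single, smul_eq_mul, mul_one]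
      exact matrix_eq_sum_single B
    calc α B = α (∑ p : Fin n × Fin n, (B p.1 p.2) • Matrix.single p.1 p.2 (1:ℝ)) := by
              rw [← hx]
      _ ≤ ∑ p : Fin n × Fin n, α ((B p.1 p.2) • Matrix.single p.1 p.2 (1:ℝ)) := αsum _ _
      _ = ∑ p : Fin n × Fin n, |B p.1 p.2| * α (Matrix.single p.1 p.2 (1:ℝ)) := by
              simp_rw [hα_smul]
      _ ≤ ∑ p : Fin n × Fin n, ‖B‖ * α (Matrix.single p.1 p.2 (1:ℝ)) := by
              apply Finset.sum_le_sum
              intro p _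
              exact mul_le_mul_of_nonneg_right (Matrix.norm_entry_le_entrywise_sup_norm B)
                (αnonneg _)
      _ = K * ‖B‖ := by rw [← Finset.mul_sum, mul_comm]
  have hcont : Continuous α := by
    have : LipschitzWith (Real.toNNReal K) α := by
      apply LipschitzWith.of_dist_le_mul
      intro B C
      rw [Real.dist_eq, Real.coe_toNNReal K hKnonneg, dist_eq_norm]
      have h1 : α B - α C ≤ α (B - C) := by
        have := hα_add (B - C) C
        rw [sub_add_cancel] at this
        linarith
      have h2 : α C - α B ≤ α (B - C) := by
        have := hα_add (C - B) B
        rw [sub_add_cancel] at this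
        have hneg : α (B - C) = α (C - B) := by
          have h4 := hα_smul (-1) (C - B)
          rw [neg_smul, one_smul, neg_sub] at h4
          simpa using h4
        linarith [hneg]
      have := abs_sub_le_iff.mpr ⟨h1, h2⟩
      exact this.trans (αle _)
    exact this.continuous
  -- lower bound : c * ‖B‖ ≤ α B
  obtain ⟨x₀, hx₀s, hx₀min⟩ := (isCompact_sphere (0 : Matrix (Fin n) (Fin n) ℝ) 1).exists_isMinOn
    (NormedSpace.sphere_nonempty.mpr zero_le_one) hcont.continuousOn
  have hx₀norm : ‖x₀‖ = 1 := by simpa using mem_sphere_zero_iff_norm.mp hx₀s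
  set c : ℝ := α x₀ with hc
  have hcpos : 0 < c := αpos x₀ (by intro h; rw [h] at hx₀norm; simp at hx₀norm)
  have αge : ∀ B : Matrix (Fin n) (Fin n) ℝ, c * ‖B‖ ≤ α B := by
    intro B
    rcases eq_or_ne B 0 with rfl | hB
    · simp [α0]
    · have hnB : 0 < ‖B‖ := norm_pos_iff.mpr hB
      have hu : (‖B‖⁻¹ • B) ∈ Metric.sphere (0 : Matrix (Fin n) (Fin n) ℝ) 1 := by
        rw [mem_sphere_zero_iff_norm, norm_smul, norm_inv, norm_norm,
          inv_mul_cancel₀ (ne_of_gt hnB)]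
      have h5 : c ≤ α (‖B‖⁻¹ • B) := hx₀min hu
      have heq : α (‖B‖⁻¹ • B) = ‖B‖⁻¹ * α B := by
        rw [hα_smul, abs_of_pos (inv_pos.mpr hnB)]
      rw [heq] at h5
      calc c * ‖B‖ ≤ (‖B‖⁻¹ * α B) * ‖B‖ :=
            mul_le_mul_of_nonneg_right h5 (le_of_lt hnB)
        _ = α B := by field_simp
  -- the unit ball of α is compact
  set Kset : Set (Matrix (Fin n) (Fin n) ℝ) := {B | α B ≤ 1} with hKset
  have hKclosed : IsClosed Kset := isClosed_le hcont continuous_const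
  have hKbdd : Bornology.IsBounded Kset := by
    rw [Metric.isBounded_iff_subset_closedBall 0]
    refine ⟨c⁻¹, fun B hB => ?_⟩
    rw [Metric.mem_closedBall, dist_zero_right]
    have h1 : c * ‖B‖ ≤ 1 := (αge B).trans hB
    rw [← le_div_iff₀' hcpos] at h1
    simpa [one_div] using h1
  have hKcompact : IsCompact Kset := Metric.isCompact_of_isClosed_isBounded hKclosed hKbdd
  -- maximize |det| on Kset
  obtain ⟨A, hAK, hAmax⟩ := hKcompact.exists_isMaxOn ⟨0, by simp [hKset, α0]⟩
    ((continuous_abs.comp (continuous_id.matrix_det)).continuousOn)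
  have hAmax' : ∀ B ∈ Kset, |B.det| ≤ |A.det| := fun B hB => hAmax hB
  set d : ℝ := |A.det| with hd
  -- d > 0
  have hone : (1 : Matrix (Fin n) (Fin n) ℝ) ≠ 0 := by
    intro h
    have := congrFun (congrFun h ⟨0, hn⟩) ⟨0, hn⟩
    simp [Matrix.one_apply_eq] at this
  have hα1 : 0 < α 1 := αpos 1 hone
  have hdpos : 0 < d := by
    have hCmem : ((α 1)⁻¹ • (1 : Matrix (Fin n) (Fin n) ℝ)) ∈ Kset := by
      show α _ ≤ 1
      rw [hα_smul, abs_of_pos (inv_pos.mpr hα1), inv_mul_cancel₀ (ne_of_gt hα1)]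
    have hCdet : |((α 1)⁻¹ • (1 : Matrix (Fin n) (Fin n) ℝ)).det| = ((α 1)⁻¹) ^ n := by
      rw [Matrix.det_smul, Matrix.det_one, mul_one, abs_pow,
        abs_of_pos (inv_pos.mpr hα1), Fintype.card_fin]
    have := hAmax' _ hCmem
    rw [hCdet] at this
    exact lt_of_lt_of_le (pow_pos (inv_pos.mpr hα1) n) this
  have hdet_ne : A.det ≠ 0 := by
    intro h
    rw [hd, h, abs_zero] at hdpos
    exact lt_irrefl 0 hdpos
  have hunit : IsUnit A.det := isUnit_iff_ne_zero.mpr hdet_ne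
  -- α A = 1
  have hAne : A ≠ 0 := by
    intro h
    rw [h, Matrix.det_zero] at hdet_ne
    exact hdet_ne rfl
  have hαA : α A = 1 := by
    by_contra hne
    have ha1 : α A < 1 := lt_of_le_of_ne hAK hne
    have hapos : 0 < α A := αpos A hAne
    have hmem : ((α A)⁻¹ • A) ∈ Kset := by
      show α _ ≤ 1
      rw [hα_smul, abs_of_pos (inv_pos.mpr hapos), inv_mul_cancel₀ (ne_of_gt hapos)]
    have hdet' : |((α A)⁻¹ • A).det| = ((α A)⁻¹) ^ n * d := by
      rw [Matrix.det_smul, abs_mul, abs_pow, abs_of_pos (inv_pos.mpr hapos),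
        Fintype.card_fin, hd]
    have hgt : 1 < ((α A)⁻¹) ^ n := by
      apply one_lt_pow₀ _ (ne_of_gt hn)
      rw [lt_inv_comm₀ one_pos hapos]
      simpa using ha1
    have := hAmax' _ hmem
    rw [hdet'] at this
    nlinarith
  -- general bound |det C| ≤ d * (α C)^n
  have hub : ∀ C : Matrix (Fin n) (Fin n) ℝ, |C.det| ≤ d * (α C) ^ n := by
    intro C
    rcases eq_or_ne C 0 with rfl | hC
    · rw [Matrix.det_zero, abs_zero, α0, zero_pow (ne_of_gt hn), mul_zero]
    · have hapos : 0 < α C := αpos C hC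
      have hmem : ((α C)⁻¹ • C) ∈ Kset := by
        show α _ ≤ 1
        rw [hα_smul, abs_of_pos (inv_pos.mpr hapos), inv_mul_cancel₀ (ne_of_gt hapos)]
      have := hAmax' _ hmem
      rw [Matrix.det_smul, abs_mul, abs_pow, abs_of_pos (inv_pos.mpr hapos),
        Fintype.card_fin] at this
      calc |C.det| = (α C) ^ n * (((α C)⁻¹) ^ n * |C.det|) := by
            rw [← mul_assoc, ← mul_pow, mul_inv_cancel₀ (ne_of_gt hapos), one_pow, one_mul]
        _ ≤ (α C) ^ n * d := mul_le_mul_of_nonneg_left this (pow_nonneg hapos.le n)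
        _ = d * (α C) ^ n := mul_comm _ _
  -- key trace bound
  have keytr : ∀ B : Matrix (Fin n) (Fin n) ℝ, α B ≤ 1 → (A⁻¹ * B).trace ≤ n := by
    intro B hB
    set Mm : Matrix (Fin n) (Fin n) ℝ := A⁻¹ * B with hMm
    have hAMm : ∀ t : ℝ, A * (1 + t • Mm) = A + t • B := by
      intro t
      rw [mul_add, mul_one, Matrix.mul_smul, hMm, ← Matrix.mul_assoc,
        Matrix.mul_nonsing_inv A hunit, Matrix.one_mul]
    have key : ∀ t : ℝ, 0 < t → (1 + t • Mm).det ≤ (1 + t) ^ n := by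
      intro t ht
      have hαt : α (A + t • B) ≤ 1 + t := by
        have h1 := hα_add A (t • B)
        rw [hα_smul, abs_of_pos ht, hαA] at h1
        have h2 : t * α B ≤ t * 1 := mul_le_mul_of_nonneg_left hB ht.le
        linarith
      have h1 : |(A + t • B).det| ≤ d * (1 + t) ^ n := by
        calc |(A + t • B).det| ≤ d * (α (A + t • B)) ^ n := hub _
          _ ≤ d * (1 + t) ^ n :=
            mul_le_mul_of_nonneg_left (pow_le_pow_left₀ (αnonneg _) hαt n) hdpos.le
      have h2 : (A + t • B).det = A.det * (1 + t • Mm).det := by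
        rw [← hAMm t, Matrix.det_mul]
      rw [h2, abs_mul, ← hd] at h1
      have h3 : |(1 + t • Mm).det| ≤ (1 + t) ^ n := by
        calc |(1 + t • Mm).det| = (d * |(1 + t • Mm).det|) / d := by
              field_simp
          _ ≤ (d * (1 + t) ^ n) / d := by
              gcongr
          _ = (1 + t) ^ n := by field_simp
      exact (le_abs_self _).trans h3
    set Q : Polynomial ℝ :=
      ((1 + (Polynomial.X : Polynomial ℝ) • Mm.map Polynomial.C).det).divX.divX with hQ
    have hdet1 : ∀ t : ℝ, (1 + t • Mm).det = 1 + Mm.trace * t + Q.eval t * t ^ 2 :=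
      fun t => Matrix.det_one_add_smul t Mm
    have hineq : ∀ t ∈ Ioi (0:ℝ), Mm.trace ≤ ((1 + t) ^ n - 1) / t - Q.eval t * t := by
      intro t ht
      have ht' : (0:ℝ) < t := ht
      have h := key t ht'
      rw [hdet1 t] at h
      have h2 : Mm.trace * t ≤ (1 + t) ^ n - 1 - Q.eval t * t ^ 2 := by linarith
      have h3 : Mm.trace ≤ ((1 + t) ^ n - 1 - Q.eval t * t ^ 2) / t := by
        rw [le_div_iff₀ ht']
        exact h2
      calc Mm.trace ≤ ((1 + t) ^ n - 1 - Q.eval t * t ^ 2) / t := h3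
        _ = ((1 + t) ^ n - 1) / t - Q.eval t * t := by
          field_simp
    have hlim : Tendsto (fun t => ((1 + t) ^ n - 1) / t - Q.eval t * t)
        (𝓝[>] (0:ℝ)) (𝓝 ((n:ℝ) - 0)) := by
      have hd1 : HasDerivAt (fun t : ℝ => (1 + t) ^ n) ((n:ℝ) * (1 + 0) ^ (n - 1) * 1) 0 :=
        ((hasDerivAt_id (0:ℝ)).const_add 1).fun_pow n
      have hd2 : HasDerivAt (fun t : ℝ => (1 + t) ^ n) (n:ℝ) 0 := by
        simpa using hd1
      have hslope := hasDerivAt_iff_tendsto_slope.mp hd2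
      have h1 : Tendsto (fun t => ((1 + t) ^ n - 1) / t) (𝓝[≠] (0:ℝ)) (𝓝 (n:ℝ)) := by
        apply hslope.congr'
        filter_upwards with t
        simp only [slope_def_field, div_eq_inv_mul]
        rw [sub_zero]
        ring_nf
      have h1' : Tendsto (fun t => ((1 + t) ^ n - 1) / t) (𝓝[>] (0:ℝ)) (𝓝 (n:ℝ)) :=
        h1.mono_left (nhdsWithin_mono 0 (fun x hx => ne_of_gt hx))
      have h2 : Tendsto (fun t : ℝ => Q.eval t * t) (𝓝[>] (0:ℝ)) (𝓝 0) := by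
        have hc2 : Tendsto (fun t : ℝ => Q.eval t * t) (𝓝 (0:ℝ)) (𝓝 (Q.eval 0 * 0)) :=
          (Q.continuous.tendsto 0).mul tendsto_id
        rw [mul_zero] at hc2
        exact hc2.mono_left nhdsWithin_le_nhds
      exact h1'.sub h2
    have := ge_of_tendsto hlim (eventually_nhdsWithin_of_forall hineq)
    simpa using this
  -- conclude
  refine ⟨A, hunit, hαA, ?_⟩
  have hmemn : (n:ℝ) ∈ {t | ∃ B : Matrix (Fin n) (Fin n) ℝ, α B ≤ 1 ∧ (A⁻¹ * B).trace = t} := by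
    refine ⟨A, le_of_eq hαA, ?_⟩
    rw [Matrix.nonsing_inv_mul A hunit, Matrix.trace_one]
    simp
  have hbdd : ∀ t ∈ {t | ∃ B : Matrix (Fin n) (Fin n) ℝ, α B ≤ 1 ∧ (A⁻¹ * B).trace = t}, t ≤ (n:ℝ) := by
    rintro t ⟨B, hB, rfl⟩
    exact keytr B hB
  unfold dualNorm
  exact le_antisymm (Real.sSup_le hbdd (Nat.cast_nonneg n))
    (le_csSup ⟨(n:ℝ), fun t ht => hbdd t ht⟩ hmemn)
end
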